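/- arXiv:2502.18109 — 5 statements merged into one kernel-verified Lean document; each statement's English description precedes it below -/
import Mathlib

section
/- Let 0 < z₀ < 1 and t > 0. Then the largest number s > 0 such that the hyperbolic disk B_ρ(z₀, s) is contained in the Hilbert disk B_h(z₀, t) is s = t; that is, B_ρ(z₀, t) ⊆ B_h(z₀, t), and for every s > t the inclusion B_ρ(z₀, s) ⊆ B_h(z₀, t) fails. -/
open Complex ComplexConjugate

/-- The line through two points `a`, `b` in the complex plane. -/
noncomputable def lineThrough (a b : ℂ) : Set ℂ :=
  {z : ℂ | ∃ t : ℝ, z = a + (t : ℂ) * (b - a)}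

/-- The Hilbert metric of the unit disk: for `a ≠ b`,
`h(a,b) = log (|u-b||a-v| / (|u-a||b-v|))` where `u, v` are the intersection
points of the line through `a, b` with the unit circle, ordered so that
`|u-a| < |u-b|` (equivalently `|v-b| < |v-a|`). For `a = b` the defining set
is empty and `sSup ∅ = 0`. -/
noncomputable def hilbertDist (a b : ℂ) : ℝ :=
  sSup { d : ℝ | ∃ u v : ℂ, ‖u‖ = 1 ∧ ‖v‖ = 1 ∧
    u ∈ lineThrough a b ∧ v ∈ lineThrough a b ∧
    dist u a < dist u b ∧ dist v b < dist v a ∧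
    d = Real.log ((dist u b * dist a v) / (dist u a * dist b v)) }

/-- The hyperbolic (Poincaré) metric of the unit disk, defined by
`sinh (ρ(a,b)/2) = |a-b| / √((1-|a|²)(1-|b|²))`. -/
noncomputable def rhoDist (a b : ℂ) : ℝ :=
  2 * Real.arsinh (‖a - b‖ /
    Real.sqrt ((1 - ‖a‖ ^ 2) * (1 - ‖b‖ ^ 2)))

/-- The visual angle metric of the unit disk:
`v(a,b) = sup {∠(a,z,b) : z ∈ ∂𝔹²}`. -/
noncomputable def visualAngle (a b : ℂ) : ℝ :=
  sSup { α : ℝ | ∃ z : ℂ, ‖z‖ = 1 ∧ α = EuclideanGeometry.angle a z b }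

/-- Euclidean distance from the origin to the line through `a` and `b`. -/
noncomputable def distToLine (a b : ℂ) : ℝ := Metric.infDist 0 (lineThrough a b)

/-- The Hilbert disk `B_h(z₀, t)`. -/
noncomputable def hilbertBall (z₀ : ℂ) (t : ℝ) : Set ℂ :=
  {z : ℂ | ‖z‖ < 1 ∧ hilbertDist z₀ z < t}

/-- The hyperbolic disk `B_ρ(z₀, t)`. -/
noncomputable def rhoBall (z₀ : ℂ) (t : ℝ) : Set ℂ :=
  {z : ℂ | ‖z‖ < 1 ∧ rhoDist z₀ z < t}

lemma log_div_eq_arsinh (P Q : ℝ) (hP : 0 < P) (hQ : 0 < Q) :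
    Real.log (P / Q) = 2 * Real.arsinh ((P - Q) / (2 * Real.sqrt (P * Q))) := by
  have hPQ : 0 < P * Q := mul_pos hP hQ
  have hs : 0 < Real.sqrt (P * Q) := Real.sqrt_pos.mpr hPQ
  have hsq : Real.sqrt (P * Q) ^ 2 = P * Q := Real.sq_sqrt hPQ.le
  set Y := (P - Q) / (2 * Real.sqrt (P * Q)) with hY
  have h1 : Real.sqrt (1 + Y ^ 2) = (P + Q) / (2 * Real.sqrt (P * Q)) := by
    have h : (1 : ℝ) + Y ^ 2 = ((P + Q) / (2 * Real.sqrt (P * Q))) ^ 2 := by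
      rw [hY]; field_simp; nlinarith [Real.sq_sqrt hP.le, Real.sq_sqrt hQ.le]
    rw [h, Real.sqrt_sq (by positivity)]
  have h2 : Real.arsinh Y = Real.log (P / Real.sqrt (P * Q)) := by
    rw [Real.arsinh, h1, hY]
    congr 1
    field_simp
    ring
  rw [h2, Real.log_div hP.ne' (ne_of_gt hs),
    Real.log_sqrt hPQ.le, Real.log_div hP.ne' hQ.ne', Real.log_mul hP.ne' hQ.ne']
  ring

set_option maxHeartbeats 1000000 in
lemma key (a b u v : ℂ) (su sv : ℝ)
    (hu : ‖u‖ = 1) (hv : ‖v‖ = 1)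
    (hue : u = a + (su : ℂ) * (b - a)) (hve : v = a + (sv : ℂ) * (b - a))
    (h1 : dist u a < dist u b) (h2 : dist v b < dist v a)
    (ha : ‖a‖ < 1) (hb : ‖b‖ < 1) :
    Real.log ((dist u b * dist a v) / (dist u a * dist b v)) =
      2 * Real.arsinh (dist u v * (‖(a - b)‖ /
        Real.sqrt ((1 - ‖a‖ ^ 2) * (1 - ‖b‖ ^ 2))) / 2) := by
  have hab : a ≠ b := by
    rintro rfl
    simp only [sub_self, mul_zero, add_zero] at hue
    subst hue
    exact absurd h1 (lt_irrefl _)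
  set w : ℂ := b - a with hw
  have hwne : w ≠ 0 := sub_ne_zero.mpr (Ne.symm hab)
  set L : ℝ := ‖w‖ with hL
  have hLpos : 0 < L := by simpa [hL] using (norm_pos_iff.mpr hwne)
  -- distance computations
  have du_a : dist u a = |su| * L := by
    rw [Complex.dist_eq, hue]
    simp [add_sub_cancel_left, map_mul, Complex.norm_real, Real.norm_eq_abs, hL]
  have du_b : dist u b = |su - 1| * L := by
    rw [Complex.dist_eq, hue]
    have : a + (su : ℂ) * (b - a) - b = ((su : ℝ) - 1 : ℝ) * (b - a) := by push_cast; ring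
    rw [this, norm_mul, Complex.norm_real, Real.norm_eq_abs, hL]
  have dv_a : dist a v = |sv| * L := by
    rw [Complex.dist_eq, hve]
    have : a - (a + (sv : ℂ) * (b - a)) = ((-sv : ℝ) : ℂ) * (b - a) := by push_cast; ring
    rw [this, norm_mul, Complex.norm_real, Real.norm_eq_abs, abs_neg, hL]
  have dv_a' : dist v a = |sv| * L := by rw [dist_comm]; exact dv_a
  have db_v : dist b v = |sv - 1| * L := by
    rw [Complex.dist_eq, hve]
    have : b - (a + (sv : ℂ) * (b - a)) = ((1 - sv : ℝ) : ℂ) * (b - a) := by push_cast; ring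
    rw [this, norm_mul, Complex.norm_real, Real.norm_eq_abs, hL, show |(1 : ℝ) - sv| = |sv - 1| by rw [abs_sub_comm]]
  have dv_b : dist v b = |sv - 1| * L := by rw [dist_comm]; exact db_v
  have du_v : dist u v = |su - sv| * L := by
    rw [Complex.dist_eq, hue, hve]
    have : a + (su : ℂ) * (b - a) - (a + (sv : ℂ) * (b - a)) = ((su - sv : ℝ) : ℂ) * (b - a) := by
      push_cast; ring
    rw [this, norm_mul, Complex.norm_real, Real.norm_eq_abs, hL]
  -- real coordinates
  set ar := a.re with har; set ai := a.im with hai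
  set wr := w.re with hwr; set wi := w.im with hwi
  have hNL : wr ^ 2 + wi ^ 2 = L ^ 2 := by
    rw [hL, Complex.sq_norm, Complex.normSq_apply, hwr, hwi]; ring
  have expand : ∀ s : ℝ, Complex.normSq (a + (s : ℂ) * w) = (ar + s * wr) ^ 2 + (ai + s * wi) ^ 2 := by
    intro s
    simp [Complex.normSq_apply, Complex.add_re, Complex.add_im, Complex.mul_re, Complex.mul_im,
      Complex.ofReal_re, Complex.ofReal_im, har, hai, hwr, hwi]
    ring
  have e1 : (ar + su * wr) ^ 2 + (ai + su * wi) ^ 2 = 1 := by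
    rw [← expand su, ← hue, ← Complex.sq_norm, hu]; norm_num
  have e2 : (ar + sv * wr) ^ 2 + (ai + sv * wi) ^ 2 = 1 := by
    rw [← expand sv, ← hve, ← Complex.sq_norm, hv]; norm_num
  have hna : ‖a‖ ^ 2 = ar ^ 2 + ai ^ 2 := by
    rw [Complex.sq_norm, Complex.normSq_apply, har, hai]; ring
  have hnb : ‖b‖ ^ 2 = (ar + wr) ^ 2 + (ai + wi) ^ 2 := by
    rw [Complex.sq_norm, Complex.normSq_apply]
    have hbre : b.re = ar + wr := by rw [har, hwr, hw]; simp
    have hbim : b.im = ai + wi := by rw [hai, hwi, hw]; simp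
    rw [hbre, hbim]; ring
  -- su ≠ sv
  have hsusv : su ≠ sv := by
    rintro rfl
    rw [← hve] at hue
    rw [hue] at h1
    exact absurd (h1.trans h2) (lt_irrefl _)
  have hvieta : (wr ^ 2 + wi ^ 2) * (su + sv) + 2 * (ar * wr + ai * wi) = 0 := by
    have hfac : (su - sv) * ((wr ^ 2 + wi ^ 2) * (su + sv) + 2 * (ar * wr + ai * wi)) =
        ((ar + su * wr) ^ 2 + (ai + su * wi) ^ 2) -
        ((ar + sv * wr) ^ 2 + (ai + sv * wi) ^ 2) := by ring
    rw [e1, e2, sub_self] at hfac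
    rcases mul_eq_zero.mp hfac with h | h
    · exact absurd (sub_eq_zero.mp h) hsusv
    · exact h
  have hA : 1 - ‖a‖ ^ 2 = L ^ 2 * ((-su) * sv) := by
    rw [hna, ← hNL]; linear_combination (-1 : ℝ) * e1 + su * hvieta
  have hB : 1 - ‖b‖ ^ 2 = L ^ 2 * ((1 - su) * (sv - 1)) := by
    rw [hnb, ← hNL]; linear_combination (-1 : ℝ) * e1 + (su - 1) * hvieta
  -- signs
  have hL2 : (0:ℝ) < L ^ 2 := by positivity
  have hsv2 : 1 / 2 < sv := by
    rw [dv_b, dv_a'] at h2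
    have h2' : |sv - 1| < |sv| := (mul_lt_mul_iff_of_pos_right hLpos).mp h2
    have hb1 : 1 - sv ≤ |sv - 1| := by rw [abs_sub_comm]; exact le_abs_self _
    rcases abs_choice sv with h | h
    · linarith
    · linarith
  have hsu2 : su < 1 / 2 := by
    rw [du_a, du_b] at h1
    have h1' : |su| < |su - 1| := (mul_lt_mul_iff_of_pos_right hLpos).mp h1
    have hb1 : su ≤ |su| := le_abs_self _
    rcases abs_choice (su - 1) with h | h
    · linarith
    · linarith
  have hA1 : 0 < 1 - ‖a‖ ^ 2 := by
    have : ‖a‖ ^ 2 < 1 := by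
      calc ‖a‖ ^ 2 ≤ ‖a‖ * 1 := by
            rw [sq]; exact mul_le_mul_of_nonneg_left ha.le (norm_nonneg a)
        _ < 1 := by rw [mul_one]; exact ha
    linarith
  have hB1 : 0 < 1 - ‖b‖ ^ 2 := by
    have : ‖b‖ ^ 2 < 1 := by
      calc ‖b‖ ^ 2 ≤ ‖b‖ * 1 := by
            rw [sq]; exact mul_le_mul_of_nonneg_left hb.le (norm_nonneg b)
        _ < 1 := by rw [mul_one]; exact hb
    linarith
  have hx : 0 < -su * sv := by
    have h0 : 0 < L ^ 2 * (-su * sv) := by rw [← hA]; exact hA1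
    by_contra h
    push_neg at h
    exact absurd h0 (not_lt.mpr (mul_nonpos_of_nonneg_of_nonpos hL2.le h))
  have hsu0 : su < 0 := by
    by_contra h
    push_neg at h
    exact absurd hx (not_lt.mpr
      (mul_nonpos_of_nonpos_of_nonneg (by linarith) (by linarith)))
  have hy : 0 < (1 - su) * (sv - 1) := by
    have h0 : 0 < L ^ 2 * ((1 - su) * (sv - 1)) := by rw [← hB]; exact hB1
    by_contra h
    push_neg at h
    exact absurd h0 (not_lt.mpr (mul_nonpos_of_nonneg_of_nonpos hL2.le h))
  have hsv1 : 1 < sv := by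
    by_contra h
    push_neg at h
    exact absurd hy (not_lt.mpr
      (mul_nonpos_of_nonneg_of_nonpos (by linarith) (by linarith)))
  have hP : (0:ℝ) < (1 - su) * sv := mul_pos (by linarith) (by linarith)
  have hQ : (0:ℝ) < (-su) * (sv - 1) := mul_pos (by linarith) (by linarith)
  have hPQ : (0:ℝ) < ((1 - su) * sv) * ((-su) * (sv - 1)) := mul_pos hP hQ
  have hsqrtPQ : (0:ℝ) < Real.sqrt (((1 - su) * sv) * ((-su) * (sv - 1))) :=
    Real.sqrt_pos.mpr hPQ
  -- rewrite absolute values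
  have habs1 : |su - 1| = 1 - su := by rw [abs_of_neg (by linarith : su - 1 < 0)]; ring
  have habs2 : |sv| = sv := abs_of_pos (by linarith)
  have habs3 : |su| = -su := abs_of_neg hsu0
  have habs4 : |sv - 1| = sv - 1 := abs_of_pos (by linarith)
  have habs5 : |su - sv| = sv - su := by rw [abs_of_neg (by linarith : su - sv < 0)]; ring
  have hab' : ‖(a - b)‖ = L := by
    rw [show a - b = -w by rw [hw]; ring, norm_neg, hL]
  -- sqrt computation
  have hsqrt : Real.sqrt ((1 - ‖a‖ ^ 2) * (1 - ‖b‖ ^ 2))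
      = L ^ 2 * Real.sqrt (((1 - su) * sv) * ((-su) * (sv - 1))) := by
    rw [hA, hB, show L ^ 2 * (-su * sv) * (L ^ 2 * ((1 - su) * (sv - 1)))
        = (L ^ 2 * L ^ 2) * (((1 - su) * sv) * ((-su) * (sv - 1))) by ring,
      Real.sqrt_mul (by positivity), Real.sqrt_mul_self (by positivity)]
  -- final computation
  rw [du_a, du_b, dv_a, db_v, du_v, habs1, habs2, habs3, habs4, habs5, hab', hsqrt]
  have hargL : (1 - su) * L * (sv * L) / (-su * L * ((sv - 1) * L))
      = ((1 - su) * sv) / ((-su) * (sv - 1)) := by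
    have hd1 : -su * L * ((sv - 1) * L) ≠ 0 :=
      ne_of_gt (mul_pos (mul_pos (by linarith) hLpos) (mul_pos (by linarith) hLpos))
    rw [div_eq_div_iff hd1 hQ.ne']
    ring
  have hargR : (sv - su) * L * (L / (L ^ 2 * Real.sqrt (((1 - su) * sv) * ((-su) * (sv - 1))))) / 2
      = (((1 - su) * sv) - ((-su) * (sv - 1))) / (2 * Real.sqrt (((1 - su) * sv) * ((-su) * (sv - 1)))) := by
    rw [show ((1 - su) * sv) - ((-su) * (sv - 1)) = sv - su by ring]
    have h1 : (sv - su) * L * (L / (L ^ 2 * Real.sqrt (((1 - su) * sv) * ((-su) * (sv - 1))))) / 2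
        = (sv - su) * (L ^ 2 / (L ^ 2 * Real.sqrt (((1 - su) * sv) * ((-su) * (sv - 1))))) / 2 := by
      ring
    rw [h1, div_mul_cancel_left₀ (by positivity : (L:ℝ) ^ 2 ≠ 0), inv_eq_one_div]
    ring
  rw [hargL, hargR]
  exact log_div_eq_arsinh _ _ hP hQ

lemma rhoDist_nonneg (a b : ℂ) : 0 ≤ rhoDist a b := by
  unfold rhoDist
  have : (0:ℝ) ≤ ‖(a - b)‖ /
      Real.sqrt ((1 - ‖a‖ ^ 2) * (1 - ‖b‖ ^ 2)) :=
    div_nonneg (norm_nonneg _) (Real.sqrt_nonneg _)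
  have h2 := Real.arsinh_nonneg_iff.mpr this
  linarith

lemma mem_le_rho (a b : ℂ) (ha : ‖a‖ < 1) (hb : ‖b‖ < 1) {d : ℝ}
    (hd : ∃ u v : ℂ, ‖u‖ = 1 ∧ ‖v‖ = 1 ∧
      u ∈ lineThrough a b ∧ v ∈ lineThrough a b ∧
      dist u a < dist u b ∧ dist v b < dist v a ∧
      d = Real.log ((dist u b * dist a v) / (dist u a * dist b v))) :
    d ≤ rhoDist a b := by
  obtain ⟨u, v, hu, hv, ⟨su, hue⟩, ⟨sv, hve⟩, h1, h2, rfl⟩ := hd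
  rw [key a b u v su sv hu hv hue hve h1 h2 ha hb]
  unfold rhoDist
  have hX : (0:ℝ) ≤ ‖(a - b)‖ /
      Real.sqrt ((1 - ‖a‖ ^ 2) * (1 - ‖b‖ ^ 2)) :=
    div_nonneg (norm_nonneg _) (Real.sqrt_nonneg _)
  have hm : dist u v ≤ 2 := by
    have h := norm_sub_le u v
    rw [Complex.dist_eq]
    calc ‖u - v‖ ≤ ‖u‖ + ‖v‖ := h
      _ = 2 := by rw [hu, hv]; norm_num
  have harg : dist u v * (‖(a - b)‖ /
      Real.sqrt ((1 - ‖a‖ ^ 2) * (1 - ‖b‖ ^ 2))) / 2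
      ≤ ‖(a - b)‖ /
      Real.sqrt ((1 - ‖a‖ ^ 2) * (1 - ‖b‖ ^ 2)) := by
    have := mul_le_mul_of_nonneg_right hm hX
    linarith
  have := Real.arsinh_le_arsinh.mpr harg
  linarith

lemma hilbert_le_rho (a b : ℂ) (ha : ‖a‖ < 1) (hb : ‖b‖ < 1) :
    hilbertDist a b ≤ rhoDist a b := by
  unfold hilbertDist
  exact Real.sSup_le (fun d hd => mem_le_rho a b ha hb hd) (rhoDist_nonneg a b)

lemma dist_real (x y : ℝ) (h : x < y) : dist ((x:ℂ)) ((y:ℂ)) = y - x := by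
  rw [Complex.dist_eq, show (x:ℂ) - (y:ℂ) = ((x - y : ℝ) : ℂ) by push_cast; ring,
    Complex.norm_real, Real.norm_eq_abs, abs_of_neg (by linarith : x - y < 0)]
  ring


/-- For `0 < z₀ < 1` and `t > 0`, the largest `s` with `B_ρ(z₀,s) ⊆ B_h(z₀,t)`
is `s = t`: the inclusion holds for `s = t` and fails for every `s > t`. -/
theorem rho_ball_subset_hilbert_ball (z₀ : ℝ) (h₁ : 0 < z₀) (h₂ : z₀ < 1)
    (t : ℝ) (ht : 0 < t) :
    rhoBall (z₀ : ℂ) t ⊆ hilbertBall (z₀ : ℂ) t ∧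
    ∀ s : ℝ, t < s → ¬ (rhoBall (z₀ : ℂ) s ⊆ hilbertBall (z₀ : ℂ) t) := by
  have ha : ‖(z₀ : ℂ)‖ < 1 := by
    rw [Complex.norm_real, Real.norm_eq_abs, abs_of_pos h₁]; exact h₂
  constructor
  · rintro z ⟨hz1, hz2⟩
    exact ⟨hz1, lt_of_le_of_lt (hilbert_le_rho _ _ ha hz1) hz2⟩
  · intro s hs
    set τ := (t + s) / 2 with hτ
    have hτt : t < τ := by rw [hτ]; linarith
    have hτs : τ < s := by rw [hτ]; linarith
    have hτ0 : 0 < τ := by linarith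
    have hexp : 1 < Real.exp τ := by
      rw [← Real.exp_zero]; exact Real.exp_lt_exp.mpr hτ0
    set g := Real.exp τ * ((1 + z₀) / (1 - z₀)) with hg
    have hq1 : 1 < (1 + z₀) / (1 - z₀) := (one_lt_div (by linarith)).mpr (by linarith)
    have hg1 : 1 < g := by nlinarith
    set z := (g - 1) / (g + 1) with hzdef
    have hz0 : 0 < z := div_pos (by linarith) (by linarith)
    have hz1 : z < 1 := (div_lt_one (by linarith)).mpr (by linarith)
    have hgq : (1 + z₀) / (1 - z₀) < g := by nlinarith
    have hgq' : 1 + z₀ < g * (1 - z₀) := (div_lt_iff₀ (by linarith)).mp hgq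
    have hz₀z : z₀ < z := by
      rw [hzdef, lt_div_iff₀ (by linarith : (0:ℝ) < g + 1)]
      nlinarith
    have hb : ‖(z : ℂ)‖ < 1 := by
      rw [Complex.norm_real, Real.norm_eq_abs, abs_of_pos hz0]; exact hz1
    have hzz0 : z - z₀ ≠ 0 := by intro h; linarith [sub_eq_zero.mp h]
    -- the chord parameters
    set su : ℝ := (-1 - z₀) / (z - z₀) with hsu
    set sv : ℝ := (1 - z₀) / (z - z₀) with hsv
    have hue : (-1 : ℂ) = (z₀ : ℂ) + (su : ℂ) * ((z : ℂ) - (z₀ : ℂ)) := by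
      rw [hsu, show ((z:ℂ) - (z₀:ℂ)) = ((z - z₀ : ℝ) : ℂ) by push_cast; ring,
        ← Complex.ofReal_mul, div_mul_cancel₀ _ hzz0]
      push_cast; ring
    have hve : (1 : ℂ) = (z₀ : ℂ) + (sv : ℂ) * ((z : ℂ) - (z₀ : ℂ)) := by
      rw [hsv, show ((z:ℂ) - (z₀:ℂ)) = ((z - z₀ : ℝ) : ℂ) by push_cast; ring,
        ← Complex.ofReal_mul, div_mul_cancel₀ _ hzz0]
      push_cast; ring
    -- distances
    have dua : dist (-1 : ℂ) (z₀ : ℂ) = 1 + z₀ := by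
      rw [show (-1 : ℂ) = ((-1 : ℝ) : ℂ) by norm_num, dist_real _ _ (by linarith)]; ring
    have dub : dist (-1 : ℂ) (z : ℂ) = 1 + z := by
      rw [show (-1 : ℂ) = ((-1 : ℝ) : ℂ) by norm_num, dist_real _ _ (by linarith)]; ring
    have dav : dist (z₀ : ℂ) (1 : ℂ) = 1 - z₀ := by
      rw [show (1 : ℂ) = ((1 : ℝ) : ℂ) by norm_num, dist_real _ _ (by linarith)]
    have dbv : dist (z : ℂ) (1 : ℂ) = 1 - z := by
      rw [show (1 : ℂ) = ((1 : ℝ) : ℂ) by norm_num, dist_real _ _ (by linarith)]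
    have dva : dist (1 : ℂ) (z₀ : ℂ) = 1 - z₀ := by rw [dist_comm]; exact dav
    have dvb : dist (1 : ℂ) (z : ℂ) = 1 - z := by rw [dist_comm]; exact dbv
    have duv : dist (-1 : ℂ) (1 : ℂ) = 2 := by
      rw [show (-1 : ℂ) = ((-1 : ℝ) : ℂ) by norm_num,
        show (1 : ℂ) = ((1 : ℝ) : ℂ) by norm_num, dist_real _ _ (by norm_num)]
      norm_num
    have h1d : dist (-1 : ℂ) (z₀ : ℂ) < dist (-1 : ℂ) (z : ℂ) := by
      rw [dua, dub]; linarith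
    have h2d : dist (1 : ℂ) (z : ℂ) < dist (1 : ℂ) (z₀ : ℂ) := by
      rw [dva, dvb]; linarith
    -- the cross ratio value
    have heq : (dist (-1 : ℂ) (z : ℂ) * dist (z₀ : ℂ) (1 : ℂ)) /
        (dist (-1 : ℂ) (z₀ : ℂ) * dist (z : ℂ) (1 : ℂ)) = Real.exp τ := by
      rw [dub, dav, dua, dbv, hzdef]
      have hgden : (0:ℝ) < g + 1 := by linarith
      have hden : g * (1 - z₀) = Real.exp τ * (1 + z₀) := by
        rw [hg]; field_simp [ne_of_gt (by linarith : (0:ℝ) < 1 - z₀)]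
      field_simp
      nlinarith [hden]
    have hlog : Real.log ((dist (-1 : ℂ) (z : ℂ) * dist (z₀ : ℂ) (1 : ℂ)) /
        (dist (-1 : ℂ) (z₀ : ℂ) * dist (z : ℂ) (1 : ℂ))) = τ := by
      rw [heq, Real.log_exp]
    -- key identity
    have hkey := key (z₀ : ℂ) (z : ℂ) (-1 : ℂ) (1 : ℂ) su sv
      (by norm_num) (by norm_num) hue hve h1d h2d ha hb
    have hρ : rhoDist (z₀ : ℂ) (z : ℂ) = τ := by
      rw [duv, show (2:ℝ) * (‖((z₀:ℂ) - (z:ℂ))‖ /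
          Real.sqrt ((1 - ‖(z₀:ℂ)‖ ^ 2) * (1 - ‖(z:ℂ)‖ ^ 2))) / 2
        = ‖((z₀:ℂ) - (z:ℂ))‖ /
          Real.sqrt ((1 - ‖(z₀:ℂ)‖ ^ 2) * (1 - ‖(z:ℂ)‖ ^ 2)) from by
            ring] at hkey
      rw [rhoDist, ← hkey, hlog]
    have hmem : τ ∈ { d : ℝ | ∃ u v : ℂ, ‖u‖ = 1 ∧ ‖v‖ = 1 ∧
        u ∈ lineThrough (z₀ : ℂ) (z : ℂ) ∧ v ∈ lineThrough (z₀ : ℂ) (z : ℂ) ∧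
        dist u (z₀ : ℂ) < dist u (z : ℂ) ∧ dist v (z : ℂ) < dist v (z₀ : ℂ) ∧
        d = Real.log ((dist u (z : ℂ) * dist (z₀ : ℂ) v) / (dist u (z₀ : ℂ) * dist (z : ℂ) v)) } :=
      ⟨-1, 1, by norm_num, by norm_num, ⟨su, hue⟩, ⟨sv, hve⟩, h1d, h2d, hlog.symm⟩
    have hbdd : BddAbove { d : ℝ | ∃ u v : ℂ, ‖u‖ = 1 ∧ ‖v‖ = 1 ∧
        u ∈ lineThrough (z₀ : ℂ) (z : ℂ) ∧ v ∈ lineThrough (z₀ : ℂ) (z : ℂ) ∧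
        dist u (z₀ : ℂ) < dist u (z : ℂ) ∧ dist v (z : ℂ) < dist v (z₀ : ℂ) ∧
        d = Real.log ((dist u (z : ℂ) * dist (z₀ : ℂ) v) / (dist u (z₀ : ℂ) * dist (z : ℂ) v)) } :=
      ⟨rhoDist (z₀ : ℂ) (z : ℂ), fun d hd => mem_le_rho _ _ ha hb hd⟩
    have hge : τ ≤ hilbertDist (z₀ : ℂ) (z : ℂ) := le_csSup hbdd hmem
    intro hsub
    have hzmem : (z : ℂ) ∈ rhoBall (z₀ : ℂ) s := ⟨hb, by rw [hρ]; exact hτs⟩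
    obtain ⟨_, hlt⟩ := hsub hzmem
    linarith
end

section
/- Let a, b ∈ 𝔹² with a ≠ b and |a| ≠ |b|, and set t = (−(1−|a|²) + √((1−|a|²)(1−|b|²))) / (|a|² − |b|²) and c = (1−t)a + t·b. Then 0 < t < 1, c ∈ 𝔹², h(a,c) = h(c,b), and moreover ρ(a,c) = ρ(c,b); that is, c is simultaneously the Hilbert midpoint and the hyperbolic midpoint of a and b on the segment [a,b]. -/
open Complex ComplexConjugate

lemma normSq_add_real_smul (a w : ℂ) (s : ℝ) :
    Complex.normSq (a + (s:ℂ)*w) =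
      Complex.normSq a + 2*s*(a*(starRingEnd ℂ) w).re + s^2 * Complex.normSq w := by
  simp [Complex.normSq_apply, Complex.add_re, Complex.add_im, Complex.mul_re, Complex.mul_im,
    Complex.conj_re, Complex.conj_im]
  ring

lemma key_identity (a' b' c' d' t : ℝ) (ha' : 0 < a') (hc' : 0 < c')
    (hb0 : 0 ≤ b') (hd0 : 0 ≤ d')
    (hb : b'^2 = a'^2 + 1) (hd : d'^2 = c'^2 - 1)
    (ht : t * (a'*c' + b'*d') = a'*c') :
    (t + a'^2)^2 * (c'^2 * d'^2) = (a'^2 * b'^2) * (c'^2 - t)^2 := by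
  have hK : 0 < a'*c' + b'*d' := by positivity
  have hlin : (t + a'^2)*(c'*d') = (c'^2 - t)*(a'*b') := by
    have h2 : ((t + a'^2)*(c'*d') - (c'^2 - t)*(a'*b')) * (a'*c'+b'*d') = 0 := by
      linear_combination (c'*d'+a'*b')*ht + (-(a'*c'^2*d'))*hb + (a'^2*b'*c')*hd
    rcases mul_eq_zero.mp h2 with h | h
    · linarith
    · exact absurd h hK.ne'
  linear_combination ((t + a'^2)*(c'*d') + (c'^2 - t)*(a'*b')) * hlin


set_option maxHeartbeats 1000000

/-- The Hilbert midpoint: for distinct `a, b ∈ 𝔹²` with `|a| ≠ |b|` and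
`t = (-(1-|a|²) + √((1-|a|²)(1-|b|²))) / (|a|² - |b|²)`, the point
`c = (1-t)a + tb` satisfies `0 < t < 1`, `c ∈ 𝔹²`, `h(a,c) = h(c,b)`
and `ρ(a,c) = ρ(c,b)`. -/
theorem hilbert_midpoint (a b : ℂ)
    (ha : ‖a‖ < 1) (hb : ‖b‖ < 1) (hab : a ≠ b)
    (habs : ‖a‖ ≠ ‖b‖)
    (t : ℝ)
    (htdef : t = (-(1 - ‖a‖ ^ 2) +
        Real.sqrt ((1 - ‖a‖ ^ 2) * (1 - ‖b‖ ^ 2))) /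
      (‖a‖ ^ 2 - ‖b‖ ^ 2))
    (c : ℂ) (hcdef : c = ((1 - t : ℝ) : ℂ) * a + (t : ℂ) * b) :
    0 < t ∧ t < 1 ∧ ‖c‖ < 1 ∧
      hilbertDist a c = hilbertDist c b ∧ rhoDist a c = rhoDist c b := by
  set α := 1 - ‖a‖ ^ 2 with hαdef
  set β := 1 - ‖b‖ ^ 2 with hβdef
  have hα0 : 0 < α := by nlinarith [norm_nonneg a]
  have hβ0 : 0 < β := by nlinarith [norm_nonneg b]
  set sa := Real.sqrt α with hsadef
  set sb := Real.sqrt β with hsbdef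
  have hsa0 : 0 < sa := Real.sqrt_pos.mpr hα0
  have hsb0 : 0 < sb := Real.sqrt_pos.mpr hβ0
  have hsa2 : sa ^ 2 = α := Real.sq_sqrt hα0.le
  have hsb2 : sb ^ 2 = β := Real.sq_sqrt hβ0.le
  have hA2 : ‖a‖ ^ 2 = 1 - sa ^ 2 := by rw [hsa2]; rw [hαdef]; ring
  have hB2 : ‖b‖ ^ 2 = 1 - sb ^ 2 := by rw [hsb2]; rw [hβdef]; ring
  have hsab : sa ≠ sb := by
    intro h
    apply habs
    nlinarith [norm_nonneg a, norm_nonneg b]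
  have hd2 : ‖a‖ ^ 2 - ‖b‖ ^ 2 ≠ 0 := by
    rw [hA2, hB2]; intro h
    apply hsab
    nlinarith
  have hsm : Real.sqrt (α * β) = sa * sb := Real.sqrt_mul hα0.le β
  have ht1 : t * (sa + sb) = sa := by
    rw [htdef, div_mul_eq_mul_div, div_eq_iff hd2, hsm, hA2, hB2]
    have h : α = sa ^ 2 := hsa2.symm
    rw [h]
    ring
  have ht0 : 0 < t := by
    have : t = sa / (sa + sb) := by
      field_simp at ht1 ⊢
      linarith
    rw [this]; positivity
  have ht1' : t < 1 := by nlinarith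
  -- quadratic setup
  set w := b - a with hwdef
  have hw0 : w ≠ 0 := sub_ne_zero.mpr (Ne.symm hab)
  set L := ‖w‖ with hLdef
  have hL0 : 0 < L := norm_pos_iff.mpr hw0
  set nsw := Complex.normSq w with hnswdef
  have hnsw0 : 0 < nsw := Complex.normSq_pos.mpr hw0
  have hnswL : nsw = L ^ 2 := (Complex.sq_norm w).symm
  set p := (a * (starRingEnd ℂ) w).re with hpdef
  set D0 := p ^ 2 + nsw * α with hD0def
  have hD0 : 0 < D0 := by positivity
  set sD := Real.sqrt D0 with hsDdef
  have hsD0 : 0 < sD := Real.sqrt_pos.mpr hD0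
  have hsD2 : sD ^ 2 = D0 := Real.sq_sqrt hD0.le
  set s₁ := (-p - sD) / nsw with hs1def
  set s₂ := (-p + sD) / nsw with hs2def
  clear_value α β L nsw p D0 sD s₁ s₂
  have hsum : nsw * (s₁ + s₂) = -2 * p := by
    rw [hs1def, hs2def]; field_simp; ring
  have hprod : nsw * (s₁ * s₂) = -α := by
    have e : (-p - sD) * (-p + sD) = p ^ 2 - D0 := by linear_combination -hsD2
    have h5 : nsw * (s₁ * s₂) = ((-p - sD) * (-p + sD)) / nsw := by
      rw [hs1def, hs2def]; field_simp
    rw [h5, e, hD0def]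
    field_simp
    ring
  have hna : Complex.normSq a = 1 - α := by
    rw [hαdef, ← Complex.sq_norm]; ring
  have hq : ∀ s : ℝ, Complex.normSq (a + (s:ℂ)*w) - 1 = nsw * ((s - s₁)*(s - s₂)) := by
    intro s
    rw [normSq_add_real_smul, hna, ← hpdef, ← hnswdef]
    linear_combination s * hsum - hprod
  have hlt : s₁ < s₂ := by
    rw [hs1def, hs2def]
    exact (div_lt_div_iff_of_pos_right hnsw0).mpr (by linarith)
  -- special points on the parametrized line
  have hbw : b = a + ((1:ℝ):ℂ)*w := by rw [hwdef]; push_cast; ring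
  have hcw : c = a + (t:ℂ)*w := by rw [hcdef, hwdef]; push_cast; ring
  have hq0 : nsw * ((-s₁) * s₂) = α := by linear_combination -hprod
  have hq1 : nsw * ((1 - s₁) * (s₂ - 1)) = β := by
    have h := hq 1
    rw [← hbw] at h
    have hnb : Complex.normSq b = 1 - β := by rw [hβdef, ← Complex.sq_norm]; ring
    rw [hnb] at h
    linear_combination h
  have hqt : nsw * ((t - s₁) * (s₂ - t)) = 1 - Complex.normSq c := by
    have h := hq t
    rw [← hcw] at h
    linear_combination h
  -- ordering
  have hs1neg : s₁ < 0 := by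
    by_contra h
    push_neg at h
    have h2 : 0 < s₂ := lt_of_le_of_lt h hlt
    have h3 : 0 ≤ nsw * (s₁ * s₂) := mul_nonneg hnsw0.le (mul_nonneg h h2.le)
    linarith
  have hs2one : 1 < s₂ := by
    by_contra h
    push_neg at h
    have h3 : 0 ≤ nsw * ((1 - s₁) * (1 - s₂)) :=
      mul_nonneg hnsw0.le (mul_nonneg (by linarith) (by linarith))
    have h4 : nsw * ((1 - s₁) * (s₂ - 1)) = -(nsw * ((1 - s₁) * (1 - s₂))) := by ring
    linarith
  have hγ : 0 < 1 - Complex.normSq c := by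
    have h5 := mul_pos hnsw0 (mul_pos (by linarith : (0:ℝ) < t - s₁)
      (by linarith : (0:ℝ) < s₂ - t))
    linarith
  have habsc : ‖c‖ < 1 := by
    have h6 : ‖c‖ ^ 2 < 1 ^ 2 := by rw [Complex.sq_norm]; norm_num; linarith
    exact lt_of_pow_lt_pow_left₀ 2 zero_le_one h6
  -- distances along the line
  have hdist : ∀ s s' : ℝ, dist (a + (s:ℂ)*w) (a + (s':ℂ)*w) = |s - s'| * L := by
    intro s s'
    rw [Complex.dist_eq]
    have h7 : (a + (s:ℂ)*w) - (a + (s':ℂ)*w) = ((s - s' : ℝ):ℂ)*w := by push_cast; ring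
    rw [h7, norm_mul, Complex.norm_real, Real.norm_eq_abs, hLdef]
  have hdista : ∀ s : ℝ, dist (a + (s:ℂ)*w) a = |s| * L := by
    intro s
    rw [Complex.dist_eq]
    have h7 : (a + (s:ℂ)*w) - a = ((s:ℝ):ℂ)*w := by push_cast; ring
    rw [h7, norm_mul, Complex.norm_real, Real.norm_eq_abs, hLdef]
  have hdistc : ∀ s : ℝ, dist (a + (s:ℂ)*w) c = |s - t| * L := by
    intro s; rw [hcw]; exact hdist s t
  have hdistb : ∀ s : ℝ, dist (a + (s:ℂ)*w) b = |s - 1| * L := by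
    intro s; rw [hbw]; exact hdist s 1
  -- membership and parametrization
  have htc : (t:ℂ) ≠ 0 := by exact_mod_cast ht0.ne'
  have htc1 : ((1:ℝ) - t : ℝ) ≠ 0 := by linarith
  have htc1' : ((1:ℂ)) - (t:ℂ) ≠ 0 := by
    intro hx
    apply htc1
    have h9 : ((1 - t : ℝ) : ℂ) = 0 := by push_cast; linear_combination hx
    exact_mod_cast h9
  have hmem_ac : ∀ s : ℝ, (a + (s:ℂ)*w) ∈ lineThrough a c := by
    intro s
    refine ⟨s/t, ?_⟩
    rw [hcw]
    push_cast
    field_simp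
    ring
  have hmem_cb : ∀ s : ℝ, (a + (s:ℂ)*w) ∈ lineThrough c b := by
    intro s
    refine ⟨(s - t)/(1 - t), ?_⟩
    rw [hcw, hbw]
    push_cast
    field_simp
    ring
  have hparam_ac : ∀ z ∈ lineThrough a c, ∃ s : ℝ, z = a + (s:ℂ)*w := by
    rintro z ⟨r, hz⟩
    exact ⟨r*t, by rw [hz, hcw]; push_cast; ring⟩
  have hparam_cb : ∀ z ∈ lineThrough c b, ∃ s : ℝ, z = a + (s:ℂ)*w := by
    rintro z ⟨r, hz⟩
    exact ⟨t + r*(1-t), by rw [hz, hcw, hbw]; push_cast; ring⟩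
  have hroot : ∀ s : ℝ, ‖a + (s:ℂ)*w‖ = 1 → s = s₁ ∨ s = s₂ := by
    intro s hs
    have h1 : Complex.normSq (a + (s:ℂ)*w) = 1 := by
      rw [← Complex.sq_norm, hs]; norm_num
    have h2 := hq s
    rw [h1] at h2
    have h4 : nsw * ((s - s₁)*(s - s₂)) = 0 := by linarith
    rcases mul_eq_zero.mp h4 with h | h
    · exact absurd h hnsw0.ne'
    · rcases mul_eq_zero.mp h with h | h
      · exact Or.inl (sub_eq_zero.mp h)
      · exact Or.inr (sub_eq_zero.mp h)
  -- the two circle points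
  set U := a + ((s₁:ℝ):ℂ)*w with hUdef
  set V := a + ((s₂:ℝ):ℂ)*w with hVdef
  have habsU : ‖U‖ = 1 := by
    have h1 := hq s₁
    have h2 : Complex.normSq (a + ((s₁:ℝ):ℂ)*w) = 1 := by
      have h3 : nsw * ((s₁ - s₁)*(s₁ - s₂)) = 0 := by ring
      linarith
    rw [hUdef, Complex.norm_def, h2, Real.sqrt_one]
  have habsV : ‖V‖ = 1 := by
    have h1 := hq s₂
    have h2 : Complex.normSq (a + ((s₂:ℝ):ℂ)*w) = 1 := by
      have h3 : nsw * ((s₂ - s₁)*(s₂ - s₂)) = 0 := by ring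
      linarith
    rw [hVdef, Complex.norm_def, h2, Real.sqrt_one]
  have dUa : dist U a = (-s₁) * L := by
    rw [hUdef, hdista, abs_of_neg hs1neg]
  have dUc : dist U c = (t - s₁) * L := by
    rw [hUdef, hdistc, abs_of_neg (by linarith : s₁ - t < 0)]; ring
  have dUb : dist U b = (1 - s₁) * L := by
    rw [hUdef, hdistb, abs_of_neg (by linarith : s₁ - 1 < 0)]; ring
  have dVa : dist V a = s₂ * L := by
    rw [hVdef, hdista, abs_of_pos (by linarith : (0:ℝ) < s₂)]
  have dVc : dist V c = (s₂ - t) * L := by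
    rw [hVdef, hdistc, abs_of_pos (by linarith : (0:ℝ) < s₂ - t)]
  have dVb : dist V b = (s₂ - 1) * L := by
    rw [hVdef, hdistb, abs_of_pos (by linarith : (0:ℝ) < s₂ - 1)]
  -- the set defining hilbertDist a c is a singleton
  have hS1 : { d : ℝ | ∃ u v : ℂ, ‖u‖ = 1 ∧ ‖v‖ = 1 ∧
      u ∈ lineThrough a c ∧ v ∈ lineThrough a c ∧
      dist u a < dist u c ∧ dist v c < dist v a ∧
      d = Real.log ((dist u c * dist a v) / (dist u a * dist c v)) }
      = {Real.log ((((t - s₁)*L) * (s₂*L)) / ((((-s₁))*L) * ((s₂ - t)*L)))} := by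
    apply Set.eq_singleton_iff_unique_mem.mpr
    constructor
    · refine ⟨U, V, habsU, habsV, hmem_ac s₁, hmem_ac s₂, ?_, ?_, ?_⟩
      · rw [dUa, dUc]
        exact mul_lt_mul_of_pos_right (by linarith) hL0
      · rw [dVa, dVc]
        exact mul_lt_mul_of_pos_right (by linarith) hL0
      · rw [dist_comm a V, dist_comm c V, dUc, dUa, dVa, dVc]
    · rintro d ⟨u, v, hu1, hv1, hul, hvl, hd1, hd2', hdval⟩
      obtain ⟨s, rfl⟩ := hparam_ac u hul
      obtain ⟨s', rfl⟩ := hparam_ac v hvl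
      rcases hroot s hu1 with h | h
      · rcases hroot s' hv1 with h' | h'
        · exfalso
          rw [h'] at hd2'
          rw [hdista, hdistc, abs_of_neg hs1neg,
            abs_of_neg (by linarith : s₁ - t < 0)] at hd2'
          have h8 := lt_of_mul_lt_mul_right hd2' hL0.le
          linarith
        · rw [h, h'] at hdval
          rw [hdistc, dist_comm a _, dist_comm c _, hdista, hdista, hdistc,
            abs_of_neg hs1neg, abs_of_neg (by linarith : s₁ - t < 0),
            abs_of_pos (by linarith : (0:ℝ) < s₂),
            abs_of_pos (by linarith : (0:ℝ) < s₂ - t)] at hdval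
          rw [hdval]
          congr 1
          ring
      · exfalso
        rw [h] at hd1
        rw [hdista, hdistc, abs_of_pos (by linarith : (0:ℝ) < s₂),
          abs_of_pos (by linarith : (0:ℝ) < s₂ - t)] at hd1
        have h8 := lt_of_mul_lt_mul_right hd1 hL0.le
        linarith
  -- the set defining hilbertDist c b is a singleton
  have hS2 : { d : ℝ | ∃ u v : ℂ, ‖u‖ = 1 ∧ ‖v‖ = 1 ∧
      u ∈ lineThrough c b ∧ v ∈ lineThrough c b ∧
      dist u c < dist u b ∧ dist v b < dist v c ∧
      d = Real.log ((dist u b * dist c v) / (dist u c * dist b v)) }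
      = {Real.log ((((1 - s₁)*L) * ((s₂ - t)*L)) / (((t - s₁)*L) * ((s₂ - 1)*L)))} := by
    apply Set.eq_singleton_iff_unique_mem.mpr
    constructor
    · refine ⟨U, V, habsU, habsV, hmem_cb s₁, hmem_cb s₂, ?_, ?_, ?_⟩
      · rw [dUc, dUb]
        exact mul_lt_mul_of_pos_right (by linarith) hL0
      · rw [dVb, dVc]
        exact mul_lt_mul_of_pos_right (by linarith) hL0
      · rw [dist_comm c V, dist_comm b V, dUb, dUc, dVc, dVb]
    · rintro d ⟨u, v, hu1, hv1, hul, hvl, hd1, hd2', hdval⟩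
      obtain ⟨s, rfl⟩ := hparam_cb u hul
      obtain ⟨s', rfl⟩ := hparam_cb v hvl
      rcases hroot s hu1 with h | h
      · rcases hroot s' hv1 with h' | h'
        · exfalso
          rw [h'] at hd2'
          rw [hdistb, hdistc, abs_of_neg (by linarith : s₁ - 1 < 0),
            abs_of_neg (by linarith : s₁ - t < 0)] at hd2'
          have h8 := lt_of_mul_lt_mul_right hd2' hL0.le
          linarith
        · rw [h, h'] at hdval
          rw [hdistb, dist_comm c _, dist_comm b _, hdistb, hdistc, hdistc,
            abs_of_neg (by linarith : s₁ - 1 < 0), abs_of_neg (by linarith : s₁ - t < 0),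
            abs_of_pos (by linarith : (0:ℝ) < s₂ - 1),
            abs_of_pos (by linarith : (0:ℝ) < s₂ - t)] at hdval
          rw [hdval]
          congr 1
          ring
      · exfalso
        rw [h] at hd1
        rw [hdistb, hdistc, abs_of_pos (by linarith : (0:ℝ) < s₂ - 1),
          abs_of_pos (by linarith : (0:ℝ) < s₂ - t)] at hd1
        have h8 := lt_of_mul_lt_mul_right hd1 hL0.le
        linarith
  have hH1 : hilbertDist a c =
      Real.log ((((t - s₁)*L) * (s₂*L)) / ((((-s₁))*L) * ((s₂ - t)*L))) := by
    unfold hilbertDist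
    rw [hS1]
    exact csSup_singleton _
  have hH2 : hilbertDist c b =
      Real.log ((((1 - s₁)*L) * ((s₂ - t)*L)) / (((t - s₁)*L) * ((s₂ - 1)*L))) := by
    unfold hilbertDist
    rw [hS2]
    exact csSup_singleton _
  -- the key algebraic identity
  have hKey : (t - s₁)^2 * (s₂ * (s₂ - 1)) = ((-s₁) * (1 - s₁)) * (s₂ - t)^2 := by
    have e1 : Real.sqrt (-s₁) ^ 2 = -s₁ := Real.sq_sqrt (by linarith)
    have e2 : Real.sqrt (1 - s₁) ^ 2 = 1 - s₁ := Real.sq_sqrt (by linarith)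
    have e3 : Real.sqrt s₂ ^ 2 = s₂ := Real.sq_sqrt (by linarith)
    have e4 : Real.sqrt (s₂ - 1) ^ 2 = s₂ - 1 := Real.sq_sqrt (by linarith)
    have hnsw_sqrt : 0 < Real.sqrt nsw := Real.sqrt_pos.mpr hnsw0
    have hsaeq : sa = Real.sqrt nsw * (Real.sqrt (-s₁) * Real.sqrt s₂) := by
      rw [hsadef, show α = nsw * ((-s₁) * s₂) from by linarith,
        Real.sqrt_mul hnsw0.le, Real.sqrt_mul (by linarith : (0:ℝ) ≤ -s₁)]
    have hsbeq : sb = Real.sqrt nsw * (Real.sqrt (1-s₁) * Real.sqrt (s₂-1)) := by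
      rw [hsbdef, show β = nsw * ((1-s₁) * (s₂-1)) from hq1.symm,
        Real.sqrt_mul hnsw0.le, Real.sqrt_mul (by linarith : (0:ℝ) ≤ 1-s₁)]
    have ht' : t * (Real.sqrt (-s₁) * Real.sqrt s₂ +
        Real.sqrt (1-s₁) * Real.sqrt (s₂-1)) = Real.sqrt (-s₁) * Real.sqrt s₂ := by
      apply mul_left_cancel₀ hnsw_sqrt.ne'
      rw [hsaeq, hsbeq] at ht1
      linear_combination ht1
    have hkey := key_identity (Real.sqrt (-s₁)) (Real.sqrt (1-s₁)) (Real.sqrt s₂)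
      (Real.sqrt (s₂-1)) t (Real.sqrt_pos.mpr (by linarith : (0:ℝ) < -s₁))
      (Real.sqrt_pos.mpr (by linarith : (0:ℝ) < s₂)) (Real.sqrt_nonneg _)
      (Real.sqrt_nonneg _) (by rw [e2, e1]; ring) (by rw [e4, e3]) ht'
    rw [e1, e2, e3, e4] at hkey
    linear_combination hkey
  -- hilbert equality
  have hHeq : hilbertDist a c = hilbertDist c b := by
    rw [hH1, hH2]
    congr 1
    have hden1 : (0:ℝ) < ((-s₁))*L * ((s₂ - t)*L) :=
      mul_pos (mul_pos (by linarith) hL0) (mul_pos (by linarith) hL0)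
    have hden2 : (0:ℝ) < ((t - s₁))*L * ((s₂ - 1)*L) :=
      mul_pos (mul_pos (by linarith) hL0) (mul_pos (by linarith) hL0)
    rw [div_eq_div_iff hden1.ne' hden2.ne']
    linear_combination (L^4) * hKey
  -- rho equality
  have hγ' : 0 < 1 - ‖c‖ ^ 2 := by rw [Complex.sq_norm]; linarith
  have hrho : rhoDist a c = rhoDist c b := by
    unfold rhoDist
    congr 2
    have hac : ‖a - c‖ = t * L := by
      have h7 : a - c = ((-t:ℝ):ℂ)*w := by rw [hcw]; push_cast; ring
      rw [h7, norm_mul, Complex.norm_real, Real.norm_eq_abs, abs_of_neg (by linarith : -t < 0), hLdef]; ring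
    have hcb : ‖c - b‖ = (1 - t) * L := by
      have h7 : c - b = ((t - 1:ℝ):ℂ)*w := by rw [hcw, hbw]; push_cast; ring
      rw [h7, norm_mul, Complex.norm_real, Real.norm_eq_abs, abs_of_neg (by linarith : t - 1 < 0), hLdef]; ring
    rw [hac, hcb, ← hαdef, ← hβdef]
    rw [Real.sqrt_mul hα0.le, Real.sqrt_mul hγ'.le]
    have hden1 : (0:ℝ) < Real.sqrt α * Real.sqrt (1 - ‖c‖ ^ 2) :=
      mul_pos (Real.sqrt_pos.mpr hα0) (Real.sqrt_pos.mpr hγ')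
    have hden2 : (0:ℝ) < Real.sqrt (1 - ‖c‖ ^ 2) * Real.sqrt β :=
      mul_pos (Real.sqrt_pos.mpr hγ') (Real.sqrt_pos.mpr hβ0)
    rw [div_eq_div_iff hden1.ne' hden2.ne']
    have htsb : t * sb = (1 - t) * sa := by linear_combination ht1
    rw [hsadef, hsbdef] at htsb
    linear_combination (L * Real.sqrt (1 - ‖c‖^2)) * htsb
  exact ⟨ht0, ht1', habsc, hHeq, hrho⟩
end

section
/- For all x, y ∈ 𝔹², |x − y| ≤ 2·tanh(h(x,y)/4), where h is the Hilbert metric of the unit disk; equality holds when x = −y. -/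
open Complex ComplexConjugate

lemma my_tanh_formula (x : ℝ) : Real.tanh x = (Real.exp (2*x) - 1)/(Real.exp (2*x) + 1) := by
  rw [Real.tanh_eq_sinh_div_cosh, Real.sinh_eq, Real.cosh_eq, Real.exp_neg]
  have h := Real.exp_pos x
  have h2 : Real.exp (2*x) = Real.exp x ^ 2 := by rw [two_mul, Real.exp_add]; ring
  rw [h2]; field_simp

lemma my_tanh_mono : Monotone Real.tanh := by
  intro a b hab
  rw [my_tanh_formula, my_tanh_formula]
  have ha := Real.exp_pos (2*a)
  have hb := Real.exp_pos (2*b)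
  have hle : Real.exp (2*a) ≤ Real.exp (2*b) := Real.exp_le_exp.2 (by linarith)
  rw [div_le_div_iff₀ (by linarith) (by linarith)]
  nlinarith

lemma my_key_ineq (p q s : ℝ) (hp : 0 < p) (hq : 0 < q) (hs : 0 < s)
    (hL : p + q + s ≤ 2) :
    s ≤ 2 * Real.tanh (Real.log ((s+p)*(s+q)/(p*q)) / 4) := by
  have hs2 : s < 2 := by linarith
  have hR : (0:ℝ) < (s+p)*(s+q)/(p*q) := by positivity
  set R := (s+p)*(s+q)/(p*q) with hRdef
  set E := Real.exp (Real.log R / 4) with hEdef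
  have hE : 0 < E := Real.exp_pos _
  have hE4 : E^4 = R := by
    have h1 : E^4 = Real.exp (Real.log R/4 + Real.log R/4 + Real.log R/4 + Real.log R/4) := by
      rw [Real.exp_add, Real.exp_add, Real.exp_add]; ring
    have h2 : Real.log R/4 + Real.log R/4 + Real.log R/4 + Real.log R/4 = Real.log R := by ring
    rw [h1, h2, Real.exp_log hR]
  have htanh : Real.tanh (Real.log R / 4) = (E^2 - 1)/(E^2 + 1) := by
    rw [my_tanh_formula]
    have h3 : Real.exp (2 * (Real.log R / 4)) = E^2 := by
      rw [show 2 * (Real.log R / 4) = Real.log R/4 + Real.log R/4 by ring, Real.exp_add]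
      rw [sq]
    rw [h3]
  have hpoly : (2+s)^2 * (p*q) ≤ (s+p)*(s+q)*(2-s)^2 := by
    have hid : (s+p)*(s+q)*(2-s)^2 - (2+s)^2*(p*q)
        = s*(2-(p+q+s))*(2*(p+q+s)-s^2) + 2*s*(p-q)^2 := by ring
    have t1 : 0 ≤ s*(2-(p+q+s))*(2*(p+q+s)-s^2) := by
      apply mul_nonneg (mul_nonneg hs.le (by linarith))
      nlinarith
    have t2 : 0 ≤ 2*s*(p-q)^2 := by positivity
    nlinarith [t1, t2]
  have hcsq : ((2+s)/(2-s))^2 ≤ (E^2)^2 := by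
    rw [show (E^2)^2 = E^4 by ring, hE4, hRdef, div_pow]
    rw [div_le_div_iff₀ (pow_pos (by linarith : (0:ℝ) < 2-s) 2) (by positivity)]
    linarith [hpoly]
  have hcle : (2+s)/(2-s) ≤ E^2 :=
    (pow_le_pow_iff_left₀ (div_nonneg (by linarith) (by linarith)) (by positivity) (by norm_num)).mp hcsq
  have h1 : 2 + s ≤ E^2 * (2-s) := by
    rw [div_le_iff₀ (by linarith)] at hcle; exact hcle
  rw [htanh, show 2*((E^2-1)/(E^2+1)) = (2*(E^2-1))/(E^2+1) by ring, le_div_iff₀ (by positivity)]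
  nlinarith [h1]
noncomputable def hSet (a b : ℂ) : Set ℝ :=
  { d : ℝ | ∃ u v : ℂ, ‖u‖ = 1 ∧ ‖v‖ = 1 ∧
    u ∈ lineThrough a b ∧ v ∈ lineThrough a b ∧
    dist u a < dist u b ∧ dist v b < dist v a ∧
    d = Real.log ((dist u b * dist a v) / (dist u a * dist b v)) }

lemma my_quad (x w : ℂ) (t : ℝ) :
    ‖x + (t:ℂ)*w‖ ^ 2
      = ‖w‖ ^2 * t^2 + (2*(x * conj w).re) * t + ‖x‖ ^2 := by
  rw [Complex.sq_norm, Complex.sq_norm, Complex.sq_norm, Complex.normSq_add]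
  simp only [Complex.normSq_mul, Complex.normSq_ofReal, map_mul, Complex.conj_ofReal]
  rw [show x * ((t:ℂ) * conj w) = (t:ℂ) * (x * conj w) by ring, Complex.re_ofReal_mul]
  ring

set_option maxHeartbeats 1000000 in
lemma my_exists_good (x y : ℂ) (hx : ‖x‖ < 1) (hy : ‖y‖ < 1)
    (hne : x ≠ y) :
    ∃ d ∈ hSet x y, ‖x - y‖ ≤ 2 * Real.tanh (d / 4) := by
  set w := y - x with hwdef
  have hw : w ≠ 0 := sub_ne_zero.2 (Ne.symm hne)
  set s := ‖w‖ with hsdef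
  have hs : 0 < s := by simpa [hsdef] using (norm_pos_iff.2 hw)
  set A := s^2 with hAdef
  set B := 2*(x * conj w).re with hBdef
  set C := ‖x‖ ^ 2 - 1 with hCdef
  have hA : 0 < A := by positivity
  have hC : C < 0 := by
    have : ‖x‖ ^ 2 < 1 := by nlinarith [norm_nonneg x]
    simp [hCdef]; linarith
  have hquad : ∀ t : ℝ, ‖x + (t:ℂ)*w‖ ^ 2 = A*t^2 + B*t + C + 1 := by
    intro t; rw [my_quad]; ring
  have hABC : A + B + C < 0 := by
    have h1 := hquad 1
    have h2 : (x + (1:ℝ)*w) = y := by push_cast; rw [hwdef]; ring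
    rw [h2] at h1
    nlinarith [norm_nonneg y]
  set D := B^2 - 4*A*C with hDdef
  have hD : 0 < D := by nlinarith [sq_nonneg B, mul_pos hA (neg_pos.2 hC)]
  set r := Real.sqrt D with hrdef
  have hr2 : r^2 = D := Real.sq_sqrt hD.le
  have hrpos : 0 < r := Real.sqrt_pos.2 hD
  set t₁ := (-B - r)/(2*A) with ht1def
  set t₂ := (-B + r)/(2*A) with ht2def
  have hAne : (2*A) ≠ 0 := by positivity
  have hroot1 : A*t₁^2 + B*t₁ + C = 0 := by
    have e1 : A*t₁^2 + B*t₁ + C = (r^2 - (B^2 - 4*A*C))/(4*A) := by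
      rw [ht1def]; field_simp; ring
    rw [e1, hr2, hDdef]; simp
  have hroot2 : A*t₂^2 + B*t₂ + C = 0 := by
    have e1 : A*t₂^2 + B*t₂ + C = (r^2 - (B^2 - 4*A*C))/(4*A) := by
      rw [ht2def]; field_simp; ring
    rw [e1, hr2, hDdef]; simp
  have hprod : t₁ * t₂ < 0 := by
    have e1 : t₁ * t₂ = (B^2 - r^2)/(4*A^2) := by rw [ht1def, ht2def]; field_simp; ring
    rw [e1, hr2, hDdef]
    apply div_neg_of_neg_of_pos _ (by positivity)
    nlinarith [mul_pos hA (neg_pos.2 hC)]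
  have hprod1 : (t₁ - 1) * (t₂ - 1) < 0 := by
    have e1 : (t₁-1)*(t₂-1) = ((B+2*A)^2 - r^2)/(4*A^2) := by
      rw [ht1def, ht2def]; field_simp; ring
    rw [e1, hr2, hDdef]
    apply div_neg_of_neg_of_pos _ (by positivity)
    nlinarith [mul_pos hA (by linarith : -(A+B+C) > 0)]
  have hlt : t₁ < t₂ := by
    rw [ht1def, ht2def, div_lt_div_iff₀ (by positivity) (by positivity)]
    nlinarith
  clear_value t₁ t₂ r D A B C s w
  have ht1neg : t₁ < 0 := by nlinarith
  have ht2pos : 1 < t₂ := by nlinarith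
  -- the intersection points
  set u := x + (t₁:ℂ)*w with hudef
  set v := x + (t₂:ℂ)*w with hvdef
  clear_value u v
  have habs : ∀ t : ℝ, A*t^2 + B*t + C = 0 → ‖x + (t:ℂ)*w‖ = 1 := by
    intro t ht
    have h1 : ‖x + (t:ℂ)*w‖ ^ 2 = 1 := by rw [hquad t, ht]; ring
    have h2 := norm_nonneg (x + (t:ℂ)*w)
    nlinarith
  have hu1 : ‖u‖ = 1 := by rw [hudef]; exact habs t₁ hroot1
  have hv1 : ‖v‖ = 1 := by rw [hvdef]; exact habs t₂ hroot2
  -- distances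
  have habsw : ∀ t : ℝ, ‖(t:ℂ)*w‖ = |t| * s := by
    intro t; rw [norm_mul, Complex.norm_real, Real.norm_eq_abs, hsdef]
  have hdux : dist u x = (-t₁) * s := by
    rw [Complex.dist_eq, hudef, show x + (t₁:ℂ)*w - x = (t₁:ℂ)*w by ring, habsw,
      abs_of_neg ht1neg]
  have hduy : dist u y = (1-t₁) * s := by
    rw [Complex.dist_eq, hudef, show x + (t₁:ℂ)*w - y = ((t₁:ℝ)-1:ℝ)*(w:ℂ) by push_cast; rw [hwdef]; ring,
      habsw, abs_of_neg (by linarith : t₁ - 1 < 0)]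
    ring
  have hdvy : dist v y = (t₂-1) * s := by
    rw [Complex.dist_eq, hvdef, show x + (t₂:ℂ)*w - y = ((t₂:ℝ)-1:ℝ)*(w:ℂ) by push_cast; rw [hwdef]; ring,
      habsw, abs_of_pos (by linarith : 0 < t₂ - 1)]
  have hdvx : dist v x = t₂ * s := by
    rw [Complex.dist_eq, hvdef, show x + (t₂:ℂ)*w - x = (t₂:ℂ)*w by ring, habsw,
      abs_of_pos (by linarith : 0 < t₂)]
  set p := (-t₁) * s with hpdef
  set q := (t₂ - 1) * s with hqdef
  have hp : 0 < p := by apply mul_pos (by linarith) hs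
  have hq : 0 < q := by apply mul_pos (by linarith) hs
  -- |u - v| ≤ 2 gives p + q + s ≤ 2
  have hLle : p + q + s ≤ 2 := by
    have h1 : ‖v - u‖ = (t₂ - t₁) * s := by
      rw [hvdef, hudef, show x + (t₂:ℂ)*w - (x + (t₁:ℂ)*w) = ((t₂:ℝ)-t₁:ℝ)*(w:ℂ) by push_cast; ring,
        habsw, abs_of_pos (by linarith : 0 < t₂ - t₁)]
    have h2 : ‖v - u‖ ≤ ‖v‖ + ‖u‖ := by
      simpa using norm_sub_le v u
    rw [h1, hu1, hv1] at *
    nlinarith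
  refine ⟨Real.log ((dist u y * dist x v) / (dist u x * dist y v)), ⟨u, v, hu1, hv1,
    ⟨t₁, by rw [hudef, hwdef]⟩, ⟨t₂, by rw [hvdef, hwdef]⟩, ?_, ?_, rfl⟩, ?_⟩
  · rw [hdux, hduy]; nlinarith
  · rw [hdvy, hdvx]; nlinarith
  · have hxy : ‖x - y‖ = s := by
      rw [hsdef, hwdef, ← norm_neg]; congr 1; ring
    rw [hxy, dist_comm x v, dist_comm y v, hdux, hduy, hdvx, hdvy]
    have harg : (1-t₁)*s * (t₂*s) / ((-t₁)*s * ((t₂-1)*s)) = (s+p)*(s+q)/(p*q) := by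
      rw [hpdef, hqdef]; congr 1 <;> ring
    rw [harg]
    exact my_key_ineq p q s hp hq hs hLle

lemma my_bdd (x y : ℂ) (hx : ‖x‖ < 1) (hy : ‖y‖ < 1) :
    BddAbove (hSet x y) := by
  refine ⟨Real.log (4 / ((1 - ‖x‖)*(1 - ‖y‖))), ?_⟩
  rintro d ⟨u, v, hu, hv, _, _, _, _, rfl⟩
  have hx' : (0:ℝ) < 1 - ‖x‖ := by linarith
  have hy' : (0:ℝ) < 1 - ‖y‖ := by linarith
  have h1 : 1 - ‖x‖ ≤ dist u x := by
    have := norm_sub_norm_le u x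
    rw [Complex.dist_eq]
    simpa [hu] using this
  have h2 : 1 - ‖y‖ ≤ dist y v := by
    have := norm_sub_norm_le v y
    rw [dist_comm, Complex.dist_eq]
    simpa [hv] using this
  have h3 : dist u y ≤ 2 := by
    have := norm_sub_le u y
    rw [Complex.dist_eq]
    simp only [hu] at this ⊢
    linarith
  have h4 : dist x v ≤ 2 := by
    have := norm_sub_le x v
    rw [Complex.dist_eq]
    simp only [hv] at this ⊢
    linarith
  have h5 : 1 - ‖y‖ ≤ dist u y := by
    have := norm_sub_norm_le u y
    rw [Complex.dist_eq]
    simpa [hu] using this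
  have h6 : 1 - ‖x‖ ≤ dist x v := by
    have := norm_sub_norm_le v x
    rw [dist_comm, Complex.dist_eq]
    simpa [hv] using this
  apply Real.log_le_log
  · exact div_pos (mul_pos (by linarith) (by linarith)) (mul_pos (by linarith) (by linarith))
  · apply div_le_div₀ (by positivity) (by nlinarith) (by positivity)
    apply mul_le_mul h1 h2 (by linarith) (by linarith)

lemma my_hSet_self (x : ℂ) : hSet x x = ∅ := by
  ext d
  simp only [hSet, Set.mem_setOf_eq, Set.mem_empty_iff_false, iff_false]
  rintro ⟨u, v, _, _, _, _, h, _, _⟩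
  exact absurd h (lt_irrefl _)

lemma my_dist_smul₁ (c : ℝ) (x : ℂ) :
    dist ((c:ℂ)*x) x = |c - 1| * ‖x‖ := by
  rw [Complex.dist_eq, show (c:ℂ)*x - x = ((c-1:ℝ):ℂ)*x by push_cast; ring, norm_mul,
    Complex.norm_real, Real.norm_eq_abs]

lemma my_dist_smul₂ (c : ℝ) (x : ℂ) :
    dist ((c:ℂ)*x) (-x) = |c + 1| * ‖x‖ := by
  rw [Complex.dist_eq, show (c:ℂ)*x - (-x) = ((c+1:ℝ):ℂ)*x by push_cast; ring, norm_mul,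
    Complex.norm_real, Real.norm_eq_abs]

lemma my_hSet_neg (x : ℂ) (hx0 : x ≠ 0) (hx : ‖x‖ < 1) :
    hSet x (-x) = {Real.log ((1+‖x‖)*(1+‖x‖) /
      ((1-‖x‖)*(1-‖x‖)))} := by
  set a := ‖x‖ with hadef
  have ha : 0 < a := norm_pos_iff.2 hx0
  have ha1 : a < 1 := hx
  ext d
  simp only [Set.mem_singleton_iff]
  constructor
  · rintro ⟨u, v, hu1, hv1, ⟨t, htu⟩, ⟨t', htv⟩, h1, h2, rfl⟩
    have hu' : u = ((1-2*t : ℝ):ℂ)*x := by rw [htu]; push_cast; ring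
    have hv' : v = ((1-2*t' : ℝ):ℂ)*x := by rw [htv]; push_cast; ring
    set c := 1-2*t with hcdef
    set c' := 1-2*t' with hc'def
    rw [hu'] at hu1 h1 ⊢
    rw [hv'] at hv1 h2 ⊢
    rw [norm_mul, Complex.norm_real, Real.norm_eq_abs] at hu1 hv1
    rw [my_dist_smul₁, my_dist_smul₂] at h1
    rw [dist_comm ((c':ℂ)*x) (-x), dist_comm ((c':ℂ)*x) x] at h2
    rw [dist_comm (-x) ((c':ℂ)*x), dist_comm x ((c':ℂ)*x)] at h2
    rw [my_dist_smul₁, my_dist_smul₂] at h2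
    rw [my_dist_smul₁, my_dist_smul₂, dist_comm x ((c':ℂ)*x), dist_comm (-x) ((c':ℂ)*x),
      my_dist_smul₁, my_dist_smul₂]
    have h1' : |c-1| < |c+1| := (mul_lt_mul_iff_left₀ ha).mp h1
    have h2' : |c'+1| < |c'-1| := (mul_lt_mul_iff_left₀ ha).mp h2
    have hcpos : 0 < c := by
      have := mul_self_lt_mul_self (abs_nonneg (c-1)) h1'
      rw [abs_mul_abs_self, abs_mul_abs_self] at this
      linarith
    have hc'neg : c' < 0 := by
      have := mul_self_lt_mul_self (abs_nonneg (c'+1)) h2'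
      rw [abs_mul_abs_self, abs_mul_abs_self] at this
      linarith
    have hcval : c * a = 1 := by rw [abs_of_pos hcpos] at hu1; exact hu1
    have hc'val : c' * a = -1 := by
      rw [abs_of_neg hc'neg] at hv1; linarith
    have hcgt : 1 < c := by nlinarith
    have hc'lt : c' < -1 := by nlinarith
    have e1 : |c+1| * a = 1 + a := by rw [abs_of_pos (by linarith)]; nlinarith
    have e2 : |c-1| * a = 1 - a := by rw [abs_of_pos (by linarith)]; nlinarith
    have e3 : |c'-1| * a = 1 + a := by rw [abs_of_neg (by linarith)]; nlinarith
    have e4 : |c'+1| * a = 1 - a := by rw [abs_of_neg (by linarith)]; nlinarith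
    rw [e1, e2, e3, e4]
  · rintro rfl
    have hb1 : 1 < a⁻¹ := by
      rw [← one_div, lt_div_iff₀ ha]; linarith
    have hinva : a⁻¹ * a = 1 := inv_mul_cancel₀ (ne_of_gt ha)
    have d1 : dist (((a⁻¹:ℝ):ℂ)*x) x = 1 - a := by
      rw [my_dist_smul₁, abs_of_pos (by linarith), ← hadef]
      linear_combination hinva
    have d2 : dist (((a⁻¹:ℝ):ℂ)*x) (-x) = 1 + a := by
      rw [my_dist_smul₂, abs_of_pos (by linarith), ← hadef]
      linear_combination hinva
    have d3 : dist x (((-a⁻¹:ℝ):ℂ)*x) = 1 + a := by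
      rw [dist_comm, my_dist_smul₁, abs_of_neg (by linarith), ← hadef]
      linear_combination hinva
    have d4 : dist (-x) (((-a⁻¹:ℝ):ℂ)*x) = 1 - a := by
      rw [dist_comm, my_dist_smul₂, abs_of_neg (by linarith : -a⁻¹ + 1 < 0), ← hadef]
      linear_combination hinva
    refine ⟨((a⁻¹:ℝ):ℂ)*x, ((-a⁻¹:ℝ):ℂ)*x, ?_, ?_, ⟨(1-a⁻¹)/2, by push_cast; ring⟩,
      ⟨(1+a⁻¹)/2, by push_cast; ring⟩, ?_, ?_, ?_⟩
    · rw [norm_mul, Complex.norm_real, Real.norm_eq_abs, abs_of_pos (by linarith), ← hadef]; exact hinva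
    · rw [norm_mul, Complex.norm_real, Real.norm_eq_abs, abs_of_neg (by linarith), ← hadef]
      linear_combination hinva
    · rw [d1, d2]; linarith
    · rw [dist_comm _ (-x), dist_comm _ x, d3, d4]; linarith
    · rw [d1, d2, d3, d4]

lemma my_tanh_log (a : ℝ) (ha : 0 < a) (ha1 : a < 1) :
    2 * Real.tanh (Real.log ((1+a)*(1+a)/((1-a)*(1-a))) / 4) = 2*a := by
  have h1a : (0:ℝ) < 1 - a := by linarith
  have hR : (0:ℝ) < (1+a)*(1+a)/((1-a)*(1-a)) := by positivity
  set R := (1+a)*(1+a)/((1-a)*(1-a)) with hRdef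
  set E := Real.exp (Real.log R / 4) with hEdef
  have hE : 0 < E := Real.exp_pos _
  have hE4 : E^4 = R := by
    have h1 : E^4 = Real.exp (Real.log R/4 + Real.log R/4 + Real.log R/4 + Real.log R/4) := by
      rw [Real.exp_add, Real.exp_add, Real.exp_add]; ring
    have h2 : Real.log R/4 + Real.log R/4 + Real.log R/4 + Real.log R/4 = Real.log R := by ring
    rw [h1, h2, Real.exp_log hR]
  have htanh : Real.tanh (Real.log R / 4) = (E^2 - 1)/(E^2 + 1) := by
    rw [my_tanh_formula]
    rw [show 2 * (Real.log R / 4) = Real.log R/4 + Real.log R/4 by ring, Real.exp_add, ← hEdef, sq]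
  have hE2 : E^2 = (1+a)/(1-a) := by
    have hsq : (E^2)^2 = ((1+a)/(1-a))^2 := by
      rw [show (E^2)^2 = E^4 by ring, hE4, hRdef, div_pow]
      congr 1 <;> ring
    have h0 : (E^2 - (1+a)/(1-a)) * (E^2 + (1+a)/(1-a)) = 0 := by linear_combination hsq
    rcases mul_eq_zero.1 h0 with h | h
    · linarith
    · exfalso
      have hp : 0 < E^2 + (1+a)/(1-a) := by positivity
      linarith
  rw [htanh, hE2]
  have h1a' : (1:ℝ) - a ≠ 0 := ne_of_gt h1a
  field_simp
  ring

/-- For `x, y ∈ 𝔹²`, `|x - y| ≤ 2 tanh (h(x,y)/4)`, with equality when `x = -y`. -/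
theorem abs_sub_le_two_tanh (x y : ℂ)
    (hx : ‖x‖ < 1) (hy : ‖y‖ < 1) :
    ‖x - y‖ ≤ 2 * Real.tanh (hilbertDist x y / 4) ∧
    (x = -y → ‖x - y‖ = 2 * Real.tanh (hilbertDist x y / 4)) := by
  have hrfl : hilbertDist x y = sSup (hSet x y) := rfl
  by_cases hxy : x = y
  · subst hxy
    have h0 : hilbertDist x x = 0 := by rw [hrfl, my_hSet_self, Real.sSup_empty]
    rw [h0]
    norm_num
  · obtain ⟨d, hd, hled⟩ := my_exists_good x y hx hy hxy
    have hbdd := my_bdd x y hx hy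
    have hle : d ≤ hilbertDist x y := by rw [hrfl]; exact le_csSup hbdd hd
    have hmono := my_tanh_mono (show d/4 ≤ hilbertDist x y / 4 by linarith)
    refine ⟨by linarith, ?_⟩
    intro hxe
    have hx0 : x ≠ 0 := by
      rintro rfl
      exact hxy (by linear_combination -hxe)
    have hyx : y = -x := by linear_combination hxe
    subst hyx
    rw [show hilbertDist x (-x) = sSup (hSet x (-x)) from rfl, my_hSet_neg x hx0 hx,
      csSup_singleton]
    rw [my_tanh_log (‖x‖) (norm_pos_iff.2 hx0) hx]
    rw [sub_neg_eq_add, ← two_mul, norm_mul, Complex.norm_two]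
end

section
/- Let a, b ∈ 𝔹² be distinct points with 0 ∈ L[a,b] (the origin lies on the line through a and b), and let f : 𝔹² → 𝔹² be a holomorphic function. Then tanh(h(f(a), f(b))/4) ≤ tanh(ρ(a,b)/4), where h is the Hilbert metric and ρ is the hyperbolic metric of the unit disk. If moreover 0 ∈ L[f(a), f(b)], then tanh(ρ(f(a), f(b))/4) ≤ tanh(ρ(a,b)/4). -/
open Complex ComplexConjugate

/-! ### Auxiliary material -/

section Aux

open Metric Set

/-- The standard Möbius automorphism of the disk exchanging `a` and `0`. -/
noncomputable def moeb (a z : ℂ) : ℂ := (a - z) / (1 - conj a * z)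

lemma denom_ne (a z : ℂ) (ha : ‖a‖ < 1) (hz : ‖z‖ < 1) :
    (1 : ℂ) - conj a * z ≠ 0 := by
  intro h
  have h1 : conj a * z = 1 := by linear_combination -h
  have h2 : ‖conj a * z‖ = 1 := by rw [h1]; simp
  rw [norm_mul, Complex.norm_conj] at h2
  nlinarith [norm_nonneg a, norm_nonneg z]

lemma key_identity_s17 (a z : ℂ) :
    Complex.normSq (1 - conj a * z) - Complex.normSq (a - z)
      = (1 - Complex.normSq a) * (1 - Complex.normSq z) := by
  simp only [Complex.normSq_apply, Complex.sub_re, Complex.sub_im, Complex.mul_re,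
    Complex.mul_im, Complex.one_re, Complex.one_im, Complex.conj_re, Complex.conj_im]
  ring

lemma moeb_mem (a z : ℂ) (ha : ‖a‖ < 1) (hz : ‖z‖ < 1) :
    ‖moeb a z‖ < 1 := by
  have hd := denom_ne a z ha hz
  have hdpos : 0 < Complex.normSq (1 - conj a * z) := by
    simpa [Complex.normSq_pos] using hd
  have hkey := key_identity_s17 a z
  have hx : Complex.normSq a < 1 := by
    rw [← Complex.sq_norm]; nlinarith [norm_nonneg a]
  have hy : Complex.normSq z < 1 := by
    rw [← Complex.sq_norm]; nlinarith [norm_nonneg z]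
  have h1 : Complex.normSq (a - z) < Complex.normSq (1 - conj a * z) := by nlinarith
  have h3 : Complex.normSq (moeb a z) < 1 := by
    rw [moeb, Complex.normSq_div, div_lt_one hdpos]; exact h1
  rw [← Complex.sq_norm] at h3
  nlinarith [norm_nonneg (moeb a z)]

lemma moeb_invol (a z : ℂ) (ha : ‖a‖ < 1) (hz : ‖z‖ < 1) :
    moeb a (moeb a z) = z := by
  have hd := denom_ne a z ha hz
  have hd2 := denom_ne a (moeb a z) ha (moeb_mem a z ha hz)
  have haa := denom_ne a a ha ha
  simp only [moeb] at hd2 ⊢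
  rw [div_eq_iff hd2]
  have hq : (a - z) / (1 - conj a * z) * (1 - conj a * z) = a - z := div_mul_cancel₀ _ hd
  linear_combination -hq

lemma moeb_diffOn (a : ℂ) (ha : ‖a‖ < 1) :
    DifferentiableOn ℂ (moeb a) (ball 0 1) := by
  intro z hz
  have hz' : ‖z‖ < 1 := by simpa using mem_ball_zero_iff.1 hz
  exact (((differentiable_const a).sub differentiable_id).differentiableAt.div
    (((differentiable_const ((1:ℂ))).sub ((differentiable_const (conj a)).mul
      differentiable_id)).differentiableAt)
    (by simpa using denom_ne a z ha hz')).differentiableWithinAt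

lemma moeb_mapsTo (a : ℂ) (ha : ‖a‖ < 1) :
    Set.MapsTo (moeb a) (ball 0 1) (ball 0 1) := by
  intro z hz
  have hz' : ‖z‖ < 1 := by simpa using mem_ball_zero_iff.1 hz
  simpa [mem_ball_zero_iff] using moeb_mem a z ha hz'

/-- The Schwarz–Pick lemma in terms of the pseudo-hyperbolic distance. -/
lemma schwarz_pick (f : ℂ → ℂ) (hf : DifferentiableOn ℂ f (ball 0 1))
    (hmaps : Set.MapsTo f (ball 0 1) (ball 0 1)) (a b : ℂ)
    (ha : ‖a‖ < 1) (hb : ‖b‖ < 1) :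
    ‖moeb (f a) (f b)‖ ≤ ‖moeb a b‖ := by
  have hamem : a ∈ ball (0:ℂ) 1 := by simpa [mem_ball_zero_iff] using ha
  have hfa : ‖f a‖ < 1 := by
    simpa [mem_ball_zero_iff] using hmaps hamem
  set g : ℂ → ℂ := (moeb (f a)) ∘ f ∘ (moeb a) with hg
  have hgd : DifferentiableOn ℂ g (ball 0 1) :=
    ((moeb_diffOn (f a) hfa).comp (hf.comp (moeb_diffOn a ha) (moeb_mapsTo a ha))
      (hmaps.comp (moeb_mapsTo a ha)))
  have hgm : Set.MapsTo g (ball 0 1) (ball 0 1) :=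
    (moeb_mapsTo (f a) hfa).comp (hmaps.comp (moeb_mapsTo a ha))
  have hg0 : g 0 = 0 := by simp [hg, Function.comp, moeb]
  have hzlt : ‖moeb a b‖ < 1 := moeb_mem a b ha hb
  have hle := Complex.norm_le_norm_of_mapsTo_ball hgd (hgm.mono_right ball_subset_closedBall) hg0 hzlt
  have hgw : g (moeb a b) = moeb (f a) (f b) := by
    simp [hg, Function.comp, moeb_invol a b ha hb]
  rwa [hgw] at hle

/-- The argument of `arsinh` in `rhoDist` in terms of the pseudo-hyperbolic
distance. -/
lemma rho_arg (x y : ℂ) (hx : ‖x‖ < 1) (hy : ‖y‖ < 1) :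
    ‖x - y‖ / Real.sqrt ((1 - ‖x‖ ^ 2) * (1 - ‖y‖ ^ 2))
      = ‖moeb x y‖ / Real.sqrt (1 - ‖moeb x y‖ ^ 2) := by
  set D := ‖moeb x y‖ with hD
  set N := ‖1 - conj x * y‖ with hN
  have hNpos : 0 < N := by
    rw [hN]; exact norm_pos_iff.2 (denom_ne x y hx hy)
  have habs : ‖x - y‖ = D * N := by
    rw [hD, moeb, norm_div, ← hN, div_mul_cancel₀]
    exact hNpos.ne'
  have hsq : (1 - ‖x‖ ^ 2) * (1 - ‖y‖ ^ 2) = N ^ 2 * (1 - D ^ 2) := by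
    have hk := key_identity_s17 x y
    rw [← Complex.sq_norm, ← Complex.sq_norm x, ← Complex.sq_norm y,
      ← Complex.sq_norm (x - y)] at hk
    have hxy2 : ‖x - y‖ ^ 2 = D ^ 2 * N ^ 2 := by rw [habs]; ring
    nlinarith [hk, hxy2]
  rw [habs, hsq, Real.sqrt_mul (by positivity), Real.sqrt_sq hNpos.le]
  rw [mul_comm D N, mul_div_mul_left _ _ hNpos.ne']

/-- Monotonicity of `rhoDist` with respect to the pseudo-hyperbolic distance. -/
lemma rho_le_rho (x y x' y' : ℂ) (hx : ‖x‖ < 1) (hy : ‖y‖ < 1)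
    (hx' : ‖x'‖ < 1) (hy' : ‖y'‖ < 1)
    (h : ‖moeb x' y'‖ ≤ ‖moeb x y‖) :
    rhoDist x' y' ≤ rhoDist x y := by
  unfold rhoDist
  rw [rho_arg x y hx hy, rho_arg x' y' hx' hy']
  set D := ‖moeb x y‖ with hD
  set D' := ‖moeb x' y'‖ with hD'
  have hD1 : D < 1 := moeb_mem x y hx hy
  have hD0 : 0 ≤ D := norm_nonneg _
  have hD'0 : 0 ≤ D' := norm_nonneg _
  have hden : 0 < Real.sqrt (1 - D ^ 2) := Real.sqrt_pos.2 (by nlinarith)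
  have hg : D' / Real.sqrt (1 - D' ^ 2) ≤ D / Real.sqrt (1 - D ^ 2) := by
    apply div_le_div₀ hD0 h hden (Real.sqrt_le_sqrt (by nlinarith))
  have := Real.arsinh_le_arsinh.2 hg
  linarith

lemma my_tanh_mono_s17 {x y : ℝ} (h : x ≤ y) : Real.tanh x ≤ Real.tanh y := by
  rw [Real.tanh_eq_sinh_div_cosh, Real.tanh_eq_sinh_div_cosh,
    div_le_div_iff₀ (Real.cosh_pos x) (Real.cosh_pos y)]
  have h1 : Real.sinh (x - y) ≤ 0 := Real.sinh_nonpos_iff.2 (by linarith)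
  rw [Real.sinh_sub] at h1
  linarith

lemma rho_nonneg (x y : ℂ) : 0 ≤ rhoDist x y := by
  have h1 : 0 ≤ Real.arsinh (‖x - y‖ /
      Real.sqrt ((1 - ‖x‖ ^ 2) * (1 - ‖y‖ ^ 2))) := by
    rw [Real.arsinh_nonneg_iff]; positivity
  unfold rhoDist; linarith

set_option maxHeartbeats 800000 in
lemma real_key (t₁ t₂ A L : ℝ) (hA : 0 < A) (hL : L = Real.sqrt A)
    (ht1 : t₁ < 0) (ht2 : 1 < t₂) (hchord : (t₂ - t₁) * L ≤ 2) :
    Real.log (((1 - t₁) * t₂) / ((-t₁) * (t₂ - 1)))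
      ≤ 2 * Real.arsinh (L / (A * (Real.sqrt ((1 - t₁) * t₂) * Real.sqrt ((-t₁) * (t₂ - 1))))) := by
  set α := (1 - t₁) * t₂ with hαdef
  set β := (-t₁) * (t₂ - 1) with hβdef
  have hα : 0 < α := by rw [hαdef]; nlinarith
  have hβ : 0 < β := by rw [hβdef]; nlinarith
  set sa := Real.sqrt α with hsadef
  set sb := Real.sqrt β with hsbdef
  have hsa : 0 < sa := Real.sqrt_pos.2 hα
  have hsb : 0 < sb := Real.sqrt_pos.2 hβ
  have hsa2 : sa ^ 2 = α := Real.sq_sqrt hα.le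
  have hsb2 : sb ^ 2 = β := Real.sq_sqrt hβ.le
  have hLpos : 0 < L := by rw [hL]; exact Real.sqrt_pos.2 hA
  have hL2 : L ^ 2 = A := by rw [hL]; exact Real.sq_sqrt hA.le
  have hlog : Real.log (α / β) = 2 * Real.log (Real.sqrt (α / β)) := by
    rw [Real.log_sqrt (by positivity)]; ring
  rw [hlog]
  have harsinh : Real.log (Real.sqrt (α / β)) ≤ Real.arsinh (L / (A * (sa * sb))) := by
    rw [← Real.sinh_le_sinh, Real.sinh_arsinh,
      Real.sinh_log (Real.sqrt_pos.2 (by positivity)),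
      Real.sqrt_div hα.le, ← hsadef, ← hsbdef, inv_div]
    have elhs : (sa / sb - sb / sa) / 2 = (t₂ - t₁) / (2 * (sa * sb)) := by
      rw [div_sub_div _ _ hsb.ne' hsa.ne', div_div]
      congr 1
      · nlinarith [hsa2, hsb2]
      · ring
    rw [elhs, div_le_div_iff₀ (by positivity) (by positivity)]
    have key : (t₂ - t₁) * L * (sa * sb) ≤ 2 * (sa * sb) :=
      mul_le_mul_of_nonneg_right hchord (mul_pos hsa hsb).le
    calc (t₂ - t₁) * (A * (sa * sb)) = ((t₂ - t₁) * L * (sa * sb)) * L := by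
          rw [← hL2]; ring
      _ ≤ (2 * (sa * sb)) * L := mul_le_mul_of_nonneg_right key hLpos.le
      _ = L * (2 * (sa * sb)) := by ring
  linarith

set_option maxHeartbeats 1000000 in
/-- The Hilbert metric of the disk is dominated by the hyperbolic metric. -/
lemma hilbert_le_rho_s17 (x y : ℂ) (hx : ‖x‖ < 1) (hy : ‖y‖ < 1) :
    hilbertDist x y ≤ rhoDist x y := by
  apply Real.sSup_le _ (rho_nonneg x y)
  rintro d ⟨u, v, hu, hv, ⟨t₁, hut⟩, ⟨t₂, hvt⟩, hux, hvy, rfl⟩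
  by_cases hxy : x = y
  · rw [hxy] at hux; exact absurd hux (lt_irrefl _)
  set w := y - x with hw
  have hw0 : w ≠ 0 := sub_ne_zero.2 (Ne.symm hxy)
  set L := ‖w‖ with hLdef
  have hL : 0 < L := norm_pos_iff.2 hw0
  have d1 : dist u x = |t₁| * L := by
    have e : u - x = (t₁ : ℂ) * w := by rw [hut, hw]; ring
    rw [Complex.dist_eq, e, norm_mul, Complex.norm_real, Real.norm_eq_abs]
  have d2 : dist u y = |t₁ - 1| * L := by
    have e : u - y = ((t₁ - 1 : ℝ) : ℂ) * w := by rw [hut, hw]; push_cast; ring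
    rw [Complex.dist_eq, e, norm_mul, Complex.norm_real, Real.norm_eq_abs]
  have d3 : dist v x = |t₂| * L := by
    have e : v - x = (t₂ : ℂ) * w := by rw [hvt, hw]; ring
    rw [Complex.dist_eq, e, norm_mul, Complex.norm_real, Real.norm_eq_abs]
  have d4 : dist v y = |t₂ - 1| * L := by
    have e : v - y = ((t₂ - 1 : ℝ) : ℂ) * w := by rw [hvt, hw]; push_cast; ring
    rw [Complex.dist_eq, e, norm_mul, Complex.norm_real, Real.norm_eq_abs]
  rw [d1, d2] at hux
  rw [d3, d4] at hvy
  have h1 : |t₁| < |t₁ - 1| := lt_of_mul_lt_mul_right hux hL.le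
  have h2 : |t₂ - 1| < |t₂| := lt_of_mul_lt_mul_right hvy hL.le
  have ht1 : t₁ < 1/2 := by
    nlinarith [abs_mul_abs_self t₁, abs_mul_abs_self (t₁ - 1), abs_nonneg t₁,
      mul_self_lt_mul_self (abs_nonneg t₁) h1]
  have ht2 : 1/2 < t₂ := by
    nlinarith [abs_mul_abs_self t₂, abs_mul_abs_self (t₂ - 1), abs_nonneg (t₂ - 1),
      mul_self_lt_mul_self (abs_nonneg (t₂ - 1)) h2]
  set A := Complex.normSq w with hAdef
  have hA : 0 < A := Complex.normSq_pos.2 hw0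
  set B := x.re * w.re + x.im * w.im with hBdef
  have hexp : ∀ t : ℝ, Complex.normSq (x + (t : ℂ) * w)
      = Complex.normSq x + 2*t*B + t^2*A := by
    intro t
    simp only [hAdef, hBdef, Complex.normSq_apply, Complex.add_re, Complex.add_im,
      Complex.mul_re, Complex.mul_im, Complex.ofReal_re, Complex.ofReal_im]
    ring
  have hnu : Complex.normSq u = 1 := by
    rw [← Complex.sq_norm, hu]; norm_num
  have hnv : Complex.normSq v = 1 := by
    rw [← Complex.sq_norm, hv]; norm_num
  have e1 : Complex.normSq x + 2*t₁*B + t₁^2*A = 1 := by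
    rw [← hexp t₁, ← hut, hnu]
  have e2 : Complex.normSq x + 2*t₂*B + t₂^2*A = 1 := by
    rw [← hexp t₂, ← hvt, hnv]
  have hyeq : Complex.normSq y = Complex.normSq x + 2*B + A := by
    have h3 := hexp 1
    have h4 : x + ((1:ℝ) : ℂ) * w = y := by rw [hw]; push_cast; ring
    rw [h4] at h3; rw [h3]; ring
  have hne : t₁ ≠ t₂ := by linarith
  have hsum : A * (t₁ + t₂) + 2*B = 0 := by
    have hfac : (t₁ - t₂) * (A*(t₁+t₂) + 2*B) = 0 := by linear_combination e1 - e2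
    rcases mul_eq_zero.1 hfac with h | h
    · exact absurd (sub_eq_zero.1 h) hne
    · exact h
  have hprod : A * (t₁ * t₂) = Complex.normSq x - 1 := by
    linear_combination t₁ * hsum - e1
  have hnx : Complex.normSq x < 1 := by
    rw [← Complex.sq_norm]; nlinarith [norm_nonneg x]
  have hny : Complex.normSq y < 1 := by
    rw [← Complex.sq_norm]; nlinarith [norm_nonneg y]
  have hq0 : A * ((-t₁) * t₂) = 1 - Complex.normSq x := by linear_combination -hprod
  have hq1 : A * ((1 - t₁) * (t₂ - 1)) = 1 - Complex.normSq y := by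
    linear_combination hsum - hprod + hyeq
  have ht1neg : t₁ < 0 := by
    by_contra hc; push_neg at hc
    nlinarith [hq0, mul_nonneg (mul_nonneg hA.le hc) (by linarith : (0:ℝ) ≤ t₂)]
  have ht2gt : 1 < t₂ := by
    by_contra hc; push_neg at hc
    nlinarith [hq1, mul_nonneg (mul_nonneg hA.le (by linarith : (0:ℝ) ≤ 1 - t₁))
      (by linarith : (0:ℝ) ≤ 1 - t₂)]
  have hchord : (t₂ - t₁) * L ≤ 2 := by
    have h5 : ‖u - v‖ ≤ 2 := by
      calc ‖u - v‖ ≤ ‖u‖ + ‖v‖ := by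
            simpa [sub_eq_add_neg] using norm_add_le u (-v)
        _ = 2 := by rw [hu, hv]; norm_num
    have h6 : u - v = ((t₁ - t₂ : ℝ) : ℂ) * w := by rw [hut, hvt, hw]; push_cast; ring
    rw [h6, norm_mul, Complex.norm_real, Real.norm_eq_abs, abs_of_nonpos (by linarith : t₁ - t₂ ≤ 0)] at h5
    linarith [h5]
  have hdists : (dist u y * dist x v) / (dist u x * dist y v)
      = ((1 - t₁) * t₂) / ((-t₁) * (t₂ - 1)) := by
    rw [dist_comm x v, dist_comm y v, d1, d2, d3, d4,
      abs_of_neg ht1neg, abs_of_neg (by linarith : t₁ - 1 < 0),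
      abs_of_pos (by linarith : (0:ℝ) < t₂), abs_of_pos (by linarith : (0:ℝ) < t₂ - 1)]
    rw [show -(t₁ - 1) * L * (t₂ * L) = ((1 - t₁) * t₂) * L^2 from by ring,
      show -t₁ * L * ((t₂ - 1) * L) = ((-t₁) * (t₂ - 1)) * L^2 from by ring,
      mul_div_mul_right _ _ (pow_ne_zero 2 hL.ne')]
  rw [hdists]
  have hLA : L = Real.sqrt A := by rw [hLdef, hAdef, Complex.norm_def]
  have habxy : ‖x - y‖ = L := norm_sub_rev x y
  have hsqrtprod : Real.sqrt ((1 - ‖x‖ ^ 2) * (1 - ‖y‖ ^ 2))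
      = A * (Real.sqrt ((1 - t₁) * t₂) * Real.sqrt ((-t₁) * (t₂ - 1))) := by
    have hsq : (1 - ‖x‖ ^ 2) * (1 - ‖y‖ ^ 2)
        = A ^ 2 * (((1 - t₁) * t₂) * ((-t₁) * (t₂ - 1))) := by
      rw [Complex.sq_norm, Complex.sq_norm, ← hq0, ← hq1]; ring
    rw [hsq, Real.sqrt_mul (by positivity), Real.sqrt_mul (by nlinarith : (0:ℝ) ≤ (1 - t₁) * t₂),
      Real.sqrt_sq hA.le]
  unfold rhoDist
  rw [habxy, hsqrtprod]
  exact real_key t₁ t₂ A L hA hLA ht1neg ht2gt hchord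

end Aux

/-- Corollary of the distortion theorem for a holomorphic self-map `f` of the
unit disk: if `0 ∈ L[a,b]` then `tanh (h(f a, f b)/4) ≤ tanh (ρ(a,b)/4)`; if
moreover `0 ∈ L[f a, f b]` then `tanh (ρ(f a, f b)/4) ≤ tanh (ρ(a,b)/4)`. -/
theorem distortion_through_origin (a b : ℂ)
    (ha : ‖a‖ < 1) (hb : ‖b‖ < 1) (hab : a ≠ b)
    (h0 : (0 : ℂ) ∈ lineThrough a b)
    (f : ℂ → ℂ) (hf : DifferentiableOn ℂ f (Metric.ball 0 1))
    (hmaps : Set.MapsTo f (Metric.ball 0 1) (Metric.ball 0 1)) :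
    Real.tanh (hilbertDist (f a) (f b) / 4) ≤ Real.tanh (rhoDist a b / 4) ∧
    ((0 : ℂ) ∈ lineThrough (f a) (f b) →
      Real.tanh (rhoDist (f a) (f b) / 4) ≤ Real.tanh (rhoDist a b / 4)) := by
  have hamem : a ∈ Metric.ball (0:ℂ) 1 := by
    simpa [mem_ball_zero_iff] using ha
  have hbmem : b ∈ Metric.ball (0:ℂ) 1 := by
    simpa [mem_ball_zero_iff] using hb
  have hfa : ‖f a‖ < 1 := by
    simpa [mem_ball_zero_iff] using hmaps hamem
  have hfb : ‖f b‖ < 1 := by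
    simpa [mem_ball_zero_iff] using hmaps hbmem
  have hsp : ‖moeb (f a) (f b)‖ ≤ ‖moeb a b‖ :=
    schwarz_pick f hf hmaps a b ha hb
  have hrho : rhoDist (f a) (f b) ≤ rhoDist a b :=
    rho_le_rho a b (f a) (f b) ha hb hfa hfb hsp
  have hhil : hilbertDist (f a) (f b) ≤ rhoDist (f a) (f b) :=
    hilbert_le_rho_s17 (f a) (f b) hfa hfb
  constructor
  · exact my_tanh_mono_s17 (by linarith)
  · intro _
    exact my_tanh_mono_s17 (by linarith)
end

section
/- Let a, b ∈ 𝔹² be distinct points, let u, v be the two intersection points of the line L[a,b] with the unit circle ordered so that |u−a| < |u−b|, and let H = exp(h(a,b)) where h is the Hilbert metric of the unit disk. Then H satisfies the quadratic equation (1−|a|²)(1−|b|²)H² − ((1 − a·conj(b))² + (1 − conj(a)·b)² + 2|a−b|²)·H + (1−|a|²)(1−|b|²) = 0, and H is the larger of the two roots of this equation (the two roots being reciprocals of each other). -/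
open Complex ComplexConjugate

theorem hilbert_aux (a b : ℂ)
    (ha : ‖a‖ < 1) (hb : ‖b‖ < 1) (hab : a ≠ b)
    (u v : ℂ) (hu : ‖u‖ = 1) (hv : ‖v‖ = 1)
    (huL : u ∈ lineThrough a b) (hvL : v ∈ lineThrough a b)
    (hord : dist u a < dist u b) (huv : u ≠ v) :
    ∃ t t' : ℝ, t < 0 ∧ 1 < t' ∧
      Real.exp (hilbertDist a b) = ((1-t)*t') / ((-t)*(t'-1)) ∧
      ((b.re-a.re)^2+(b.im-a.im)^2) * (t+t') + 2*(a.re*(b.re-a.re)+a.im*(b.im-a.im)) = 0 ∧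
      ((b.re-a.re)^2+(b.im-a.im)^2) * (t*t') = a.re^2+a.im^2-1 := by
  obtain ⟨t, ht⟩ := huL
  obtain ⟨t', ht'⟩ := hvL
  set q : ℝ := (b.re-a.re)^2+(b.im-a.im)^2 with hqdef
  set r : ℝ := a.re*(b.re-a.re)+a.im*(b.im-a.im) with hrdef
  set m : ℝ := a.re^2+a.im^2-1 with hmdef
  have hba : b - a ≠ 0 := sub_ne_zero.mpr (Ne.symm hab)
  set c : ℝ := ‖b - a‖ with hcdef
  have hcpos : 0 < c := norm_pos_iff.mpr hba
  have hqc : q = c^2 := by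
    rw [hcdef, Complex.sq_norm, Complex.normSq_apply, hqdef, Complex.sub_re, Complex.sub_im]; ring
  have hqpos : 0 < q := by rw [hqc]; positivity
  have hm : m < 0 := by
    have h1 : a.re*a.re + a.im*a.im = ‖a‖^2 := by
      rw [Complex.sq_norm, Complex.normSq_apply]
    nlinarith [norm_nonneg a]
  have hf1 : q + 2*r + m < 0 := by
    have h1 : b.re*b.re + b.im*b.im = ‖b‖^2 := by
      rw [Complex.sq_norm, Complex.normSq_apply]
    rw [hqdef, hrdef, hmdef]
    nlinarith [norm_nonneg b]
  have hcir : ∀ s : ℝ, ‖a + (s:ℂ)*(b-a)‖ = 1 → q*s^2 + 2*r*s + m = 0 := by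
    intro s h
    have h2 : Complex.normSq (a + (s:ℂ)*(b-a)) = 1 := by
      rw [← Complex.sq_norm, h]; norm_num
    simp only [Complex.normSq_apply, Complex.add_re, Complex.add_im, Complex.mul_re,
      Complex.mul_im, Complex.sub_re, Complex.sub_im, Complex.ofReal_re, Complex.ofReal_im] at h2
    rw [hqdef, hrdef, hmdef]
    linear_combination h2
  have hd1 : ∀ s : ℝ, dist (a + (s:ℂ)*(b-a)) a = |s| * c := by
    intro s
    rw [Complex.dist_eq, show a + (s:ℂ)*(b-a) - a = (s:ℂ)*(b-a) by ring, norm_mul,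
      Complex.norm_real, Real.norm_eq_abs]
  have hd2 : ∀ s : ℝ, dist (a + (s:ℂ)*(b-a)) b = |s-1| * c := by
    intro s
    rw [Complex.dist_eq, show a + (s:ℂ)*(b-a) - b = ((s-1:ℝ):ℂ)*(b-a) by push_cast; ring,
      norm_mul, Complex.norm_real, Real.norm_eq_abs]
  have hloc : ∀ s : ℝ, q*s^2 + 2*r*s + m = 0 → s < 0 ∨ 1 < s := by
    intro s hs
    by_contra hcon
    push_neg at hcon
    obtain ⟨h0, h1⟩ := hcon
    rcases le_or_gt s (1/2) with hhalf | hhalf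
    · nlinarith [mul_nonneg (by linarith : (0:ℝ) ≤ 1/2 - s) (by linarith : (0:ℝ) ≤ -m),
        mul_nonneg h0 (by linarith : (0:ℝ) ≤ -(q+2*r+m)),
        mul_nonneg hqpos.le (mul_nonneg h0 (sub_nonneg.mpr h1))]
    · nlinarith [mul_nonneg (by linarith : (0:ℝ) ≤ s - 1/2) (by linarith : (0:ℝ) ≤ -(q+2*r+m)),
        mul_nonneg (by linarith : (0:ℝ) ≤ 1 - s) (by linarith : (0:ℝ) ≤ -m),
        mul_nonneg hqpos.le (mul_nonneg h0 (sub_nonneg.mpr h1))]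
  have E1 : q*t^2 + 2*r*t + m = 0 := hcir t (by rw [← ht]; exact hu)
  have E2 : q*t'^2 + 2*r*t' + m = 0 := hcir t' (by rw [← ht']; exact hv)
  have htt' : t ≠ t' := by
    intro h; apply huv; rw [ht, ht', h]
  have hvieta1 : q*(t+t') + 2*r = 0 := by
    have key : (t - t') * (q*(t+t') + 2*r) = 0 := by linear_combination E1 - E2
    rcases mul_eq_zero.mp key with h | h
    · exact absurd (sub_eq_zero.mp h) htt'
    · exact h
  have hvieta2 : q*(t*t') = m := by linear_combination t*hvieta1 - E1
  have htneg : t < 0 := by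
    rcases hloc t E1 with h | h
    · exact h
    · exfalso
      rw [ht, hd1, hd2] at hord
      have h2 := (mul_lt_mul_iff_of_pos_right hcpos).mp hord
      rw [abs_of_pos (by linarith), abs_of_pos (by linarith)] at h2
      linarith
  have ht'pos : 1 < t' := by
    rcases hloc t' E2 with h | h
    · exfalso
      have h2 : 0 < q*(t*t') := mul_pos hqpos (mul_pos_of_neg_of_neg htneg h)
      linarith [hvieta2 ▸ h2]
    · exact h
  refine ⟨t, t', htneg, ht'pos, ?_, hvieta1, hvieta2⟩
  set R : ℝ := ((1-t)*t') / ((-t)*(t'-1)) with hRdef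
  have hRpos : 0 < R :=
    div_pos (mul_pos (by linarith) (by linarith)) (mul_pos (by linarith) (by linarith))
  have hroots : ∀ s : ℝ, q*s^2 + 2*r*s + m = 0 → s = t ∨ s = t' := by
    intro s hs
    have key : q * ((s-t)*(s-t')) = 0 := by linear_combination hs - s*hvieta1 + hvieta2
    have h2 := (mul_eq_zero.mp key).resolve_left (ne_of_gt hqpos)
    rcases mul_eq_zero.mp h2 with h | h
    · exact Or.inl (sub_eq_zero.mp h)
    · exact Or.inr (sub_eq_zero.mp h)
  have htne : (-t) ≠ 0 := by linarith
  have ht1ne : t' - 1 ≠ 0 := by linarith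
  have hcne : c ≠ 0 := ne_of_gt hcpos
  have hratio : (|t - 1| * c * (|t'| * c)) / (|t| * c * (|t' - 1| * c)) = R := by
    rw [abs_of_neg htneg, abs_of_neg (by linarith : t - 1 < 0),
      abs_of_pos (by linarith : (0:ℝ) < t'), abs_of_pos (by linarith : (0:ℝ) < t' - 1), hRdef]
    rw [div_eq_div_iff
      (mul_ne_zero (mul_ne_zero htne hcne) (mul_ne_zero ht1ne hcne))
      (mul_ne_zero htne ht1ne)]
    ring
  have hSet : { d : ℝ | ∃ u v : ℂ, ‖u‖ = 1 ∧ ‖v‖ = 1 ∧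
      u ∈ lineThrough a b ∧ v ∈ lineThrough a b ∧
      dist u a < dist u b ∧ dist v b < dist v a ∧
      d = Real.log ((dist u b * dist a v) / (dist u a * dist b v)) } = {Real.log R} := by
    ext d
    simp only [Set.mem_setOf_eq, Set.mem_singleton_iff]
    constructor
    · rintro ⟨u₁, v₁, hu₁, hv₁, ⟨s₁, rfl⟩, ⟨s₂, rfl⟩, hduab, hdvba, rfl⟩
      have hs₁ : s₁ = t := by
        rcases hroots s₁ (hcir s₁ hu₁) with h | h
        · exact h
        · exfalso
          rw [hd1, hd2] at hduab
          have h2 := (mul_lt_mul_iff_of_pos_right hcpos).mp hduab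
          rw [h, abs_of_pos (by linarith), abs_of_pos (by linarith)] at h2
          linarith
      have hs₂ : s₂ = t' := by
        rcases hroots s₂ (hcir s₂ hv₁) with h | h
        · exfalso
          rw [hd2, hd1] at hdvba
          have h2 := (mul_lt_mul_iff_of_pos_right hcpos).mp hdvba
          rw [h, abs_of_neg (by linarith : t - 1 < 0), abs_of_neg htneg] at h2
          linarith
        · exact h
      rw [hs₁, hs₂, hd1 t, hd2 t, dist_comm a (a + (t' : ℂ)*(b-a)), hd1 t',
        dist_comm b (a + (t' : ℂ)*(b-a)), hd2 t']
      rw [hratio]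
    · rintro rfl
      refine ⟨u, v, hu, hv, ⟨t, ht⟩, ⟨t', ht'⟩, hord, ?_, ?_⟩
      · rw [ht', hd2, hd1]
        have h1 : |t' - 1| = t' - 1 := abs_of_pos (by linarith)
        have h2 : |t'| = t' := abs_of_pos (by linarith)
        rw [h1, h2]
        exact mul_lt_mul_of_pos_right (by linarith) hcpos
      · rw [ht, ht', hd1 t, hd2 t, dist_comm a (a + (t' : ℂ)*(b-a)), hd1 t',
          dist_comm b (a + (t' : ℂ)*(b-a)), hd2 t']
        rw [hratio]
  have hHD : hilbertDist a b = Real.log R := by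
    unfold hilbertDist
    rw [hSet, csSup_singleton]
  rw [hHD, Real.exp_log hRpos]


lemma algB (q r m t t' : ℝ) (h1 : q*(t+t')+2*r = 0) (h2 : q*(t*t') = m) :
    4*r^2 - 2*m*(q-2*r) + 2*m^2 = q^2*(((1-t)*t')^2 + ((-t)*(t'-1))^2) := by
  subst h2
  linear_combination (2*r - q*(t+t') + 2*(q*(t*t'))) * h1

lemma quadratic_root (Q X Y : ℝ) (hY : Y ≠ 0) :
    Q^2*(X*Y) * (X/Y)^2 - Q^2*(X^2+Y^2) * (X/Y) + Q^2*(X*Y) = 0 := by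
  field_simp
  ring

lemma quadratic_root_inv (Q X Y : ℝ) (hX : X ≠ 0) (hY : Y ≠ 0) :
    Q^2*(X*Y) * ((X/Y)⁻¹)^2 - Q^2*(X^2+Y^2) * ((X/Y)⁻¹) + Q^2*(X*Y) = 0 := by
  rw [inv_div]
  field_simp
  ring

lemma root_le (Q X Y x : ℝ) (hQ : 0 < Q) (hX : 0 < X) (hY : 0 < Y) (hXY : Y < X)
    (hx : Q^2*(X*Y)*x^2 - Q^2*(X^2+Y^2)*x + Q^2*(X*Y) = 0) : x ≤ X/Y := by
  have key : Q^2*((X*x - Y)*(Y*x - X)) = 0 := by linear_combination hx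
  have key2 := (mul_eq_zero.mp key).resolve_left (by positivity)
  have hone : (1:ℝ) ≤ X/Y := (one_le_div hY).mpr hXY.le
  rcases mul_eq_zero.mp key2 with h | h
  · have hx1 : x ≤ 1 := by nlinarith
    linarith
  · have hxe : x = X/Y := by rw [eq_div_iff (ne_of_gt hY)]; linarith
    exact le_of_eq hxe

set_option maxHeartbeats 1000000 in
/-- `H = exp (h(a,b))` satisfies the quadratic equation
`(1-|a|²)(1-|b|²)H² - ((1-a·conj b)² + (1-conj a·b)² + 2|a-b|²)H + (1-|a|²)(1-|b|²) = 0`,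
its reciprocal `H⁻¹` is also a root, and `H` is the larger root. -/
theorem exp_hilbertDist_quadratic (a b : ℂ)
    (ha : ‖a‖ < 1) (hb : ‖b‖ < 1) (hab : a ≠ b)
    (u v : ℂ) (hu : ‖u‖ = 1) (hv : ‖v‖ = 1)
    (huL : u ∈ lineThrough a b) (hvL : v ∈ lineThrough a b)
    (hord : dist u a < dist u b) (huv : u ≠ v) :
    (1 - ‖a‖ ^ 2) * (1 - ‖b‖ ^ 2) *
          Real.exp (hilbertDist a b) ^ 2 -
        (((1 - a * conj b) ^ 2 + (1 - conj a * b) ^ 2).re +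
            2 * ‖a - b‖ ^ 2) * Real.exp (hilbertDist a b) +
        (1 - ‖a‖ ^ 2) * (1 - ‖b‖ ^ 2) = 0 ∧
    (1 - ‖a‖ ^ 2) * (1 - ‖b‖ ^ 2) *
          ((Real.exp (hilbertDist a b))⁻¹) ^ 2 -
        (((1 - a * conj b) ^ 2 + (1 - conj a * b) ^ 2).re +
            2 * ‖a - b‖ ^ 2) * (Real.exp (hilbertDist a b))⁻¹ +
        (1 - ‖a‖ ^ 2) * (1 - ‖b‖ ^ 2) = 0 ∧
    ∀ x : ℝ,
      (1 - ‖a‖ ^ 2) * (1 - ‖b‖ ^ 2) * x ^ 2 -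
          (((1 - a * conj b) ^ 2 + (1 - conj a * b) ^ 2).re +
              2 * ‖a - b‖ ^ 2) * x +
          (1 - ‖a‖ ^ 2) * (1 - ‖b‖ ^ 2) = 0 →
      x ≤ Real.exp (hilbertDist a b) := by
  obtain ⟨t, t', htneg, ht'pos, hexp, hv1, hv2⟩ :=
    hilbert_aux a b ha hb hab u v hu hv huL hvL hord huv
  have hba : b - a ≠ 0 := sub_ne_zero.mpr (Ne.symm hab)
  have hqc : (b.re-a.re)^2+(b.im-a.im)^2 = ‖b-a‖ ^ 2 := by
    rw [Complex.sq_norm, Complex.normSq_apply, Complex.sub_re, Complex.sub_im]; ring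
  have hqpos : 0 < (b.re-a.re)^2+(b.im-a.im)^2 := by
    rw [hqc]
    exact pow_pos (norm_pos_iff.mpr hba) 2
  have ha2 : ‖a‖ ^ 2 = a.re^2+a.im^2 := by
    rw [Complex.sq_norm, Complex.normSq_apply]; ring
  have hb2 : ‖b‖ ^ 2 = b.re^2+b.im^2 := by
    rw [Complex.sq_norm, Complex.normSq_apply]; ring
  have h1a : 1 - (a.re^2+a.im^2)
      = -(((b.re-a.re)^2+(b.im-a.im)^2)*(t*t')) := by linear_combination hv2
  have h1b : 1 - (b.re^2+b.im^2)
      = -(((b.re-a.re)^2+(b.im-a.im)^2)*((1-t)*(1-t'))) := by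
    linear_combination hv2 - hv1
  have hA : (1 - ‖a‖ ^ 2) * (1 - ‖b‖ ^ 2)
      = ((b.re-a.re)^2+(b.im-a.im)^2)^2 * (((1-t)*t') * ((-t)*(t'-1))) := by
    rw [ha2, hb2, h1a, h1b]; ring
  have hre : ((1 - a*conj b)^2 + (1-conj a*b)^2).re =
      2 - 4*(a.re*b.re + a.im*b.im) +
        2*((a.re*b.re+a.im*b.im)^2 - (a.im*b.re - a.re*b.im)^2) := by
    simp only [pow_two, Complex.sub_re, Complex.mul_re, Complex.mul_im, Complex.add_re,
      Complex.sub_im, Complex.one_re, Complex.one_im, Complex.conj_re, Complex.conj_im]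
    ring
  have hab2 : ‖a-b‖^2 = (a.re-b.re)^2+(a.im-b.im)^2 := by
    rw [Complex.sq_norm, Complex.normSq_apply, Complex.sub_re, Complex.sub_im]; ring
  have hB : ((1 - a*conj b)^2 + (1-conj a*b)^2).re + 2*‖a-b‖^2 =
      ((b.re-a.re)^2+(b.im-a.im)^2)^2 * (((1-t)*t')^2 + ((-t)*(t'-1))^2) := by
    rw [hre, hab2]
    linear_combination algB ((b.re-a.re)^2+(b.im-a.im)^2)
      (a.re*(b.re-a.re)+a.im*(b.im-a.im)) (a.re^2+a.im^2-1) t t' hv1 hv2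
  have hXpos : (0:ℝ) < (1-t)*t' := mul_pos (by linarith) (by linarith)
  have hYpos : (0:ℝ) < (-t)*(t'-1) := mul_pos (by linarith) (by linarith)
  have hXY : (-t)*(t'-1) < (1-t)*t' := by
    have h9 : (1-t)*t' - (-t)*(t'-1) = t' - t := by ring
    have h10 : t < t' := by linarith
    linarith
  have hYne : (-t)*(t'-1) ≠ 0 := ne_of_gt hYpos
  have hXne : (1-t)*t' ≠ 0 := ne_of_gt hXpos
  refine ⟨?_, ?_, ?_⟩
  · rw [hexp, hA, hB]
    exact quadratic_root _ _ _ hYne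
  · rw [hexp, hA, hB]
    exact quadratic_root_inv _ _ _ hXne hYne
  · intro x hx
    rw [hA, hB] at hx
    rw [hexp]
    exact root_le _ _ _ x hqpos hXpos hYpos hXY hx
end
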